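/- arXiv:2503.02768 — 4 statements merged into one kernel-verified Lean document; each statement's English description precedes it below -/
import Mathlib

section
/- Every directed set D of LPOFs over a pointed finitely-preceded dcpo of labels has a supremum, given componentwise: the node set is the union of node sets, the order is the union of orders, the label of a node is the supremum over its labels in members of D containing it, and the formula of a node is the common formula assigned by any member of D containing it. -/
/-! ## Boolean formulae over node variables -/

inductive Form where
  | top : Form
  | bot : Form
  | conj : Form → Form → Form
  | disj : Form → Form → Form
  | neg : Form → Form
  | var : ℕ → Form

def Form.sat (v : ℕ → Bool) : Form → Prop
  | .top => True
  | .bot => False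
  | .conj a b => a.sat v ∧ b.sat v
  | .disj a b => a.sat v ∨ b.sat v
  | .neg a => ¬ a.sat v
  | .var x => v x = true

def Form.vars : Form → Set ℕ
  | .top => ∅
  | .bot => ∅
  | .conj a b => a.vars ∪ b.vars
  | .disj a b => a.vars ∪ b.vars
  | .neg a => a.vars
  | .var x => {x}

def Form.rename (f : ℕ → ℕ) : Form → Form
  | .top => .top
  | .bot => .bot
  | .conj a b => .conj (a.rename f) (b.rename f)
  | .disj a b => .disj (a.rename f) (b.rename f)
  | .neg a => .neg (a.rename f)
  | .var x => .var (f x)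

/-! ## Labels: a pointed, finitely preceded dcpo -/

class LabelDCPO (L : Type) extends PartialOrder L, OrderBot L where
  directedSupExists : ∀ S : Set L, S.Nonempty → DirectedOn (· ≤ ·) S → ∃ b, IsLUB S b
  finitelyPreceded : ∀ l : L, {l' : L | l' < l}.Finite

/-- The level of a node: length of the longest strict chain ending at it. -/
noncomputable def levOf (lt : ℕ → ℕ → Prop) (x : ℕ) : ℕ :=
  sSup {n | ∃ c : ℕ → ℕ, c n = x ∧ ∀ i < n, lt (c i) (c (i + 1))}

/-! ## Labelled partial orders with formulae -/

structure LPOF (L : Type) [LabelDCPO L] where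
  N : Set ℕ
  lt : ℕ → ℕ → Prop
  lab : ℕ → L
  form : ℕ → Form
  lt_mem : ∀ {x y}, lt x y → x ∈ N ∧ y ∈ N
  lt_trans : ∀ {x y z}, lt x y → lt y z → lt x z
  lt_irrefl : ∀ x, ¬ lt x x
  finPred : ∀ x, {y | lt y x}.Finite
  finLevel : ∀ n, {x ∈ N | levOf lt x = n}.Finite
  singleRoot : ∃! r, r ∈ N ∧ ∀ y, ¬ lt y r
  bot_maximal : ∀ x ∈ N, lab x = ⊥ → ∀ y, ¬ lt x y
  form_sat : ∀ x ∈ N, ∃ v, (form x).sat v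
  form_free : ∀ x ∈ N, ∀ y ∈ (form x).vars, lt y x
  form_impl : ∀ {x y}, lt x y → ∀ v, (form y).sat v → (form x).sat v
  lab_junk : ∀ x, x ∉ N → lab x = ⊥
  form_junk : ∀ x, x ∉ N → form x = Form.top

variable {L : Type} [LabelDCPO L]

/-- The set of ⊥-labelled nodes. -/
def LPOF.Bot (α : LPOF L) : Set ℕ := {x ∈ α.N | α.lab x = ⊥}

/-- Strict successors of a set of nodes. -/
def LPOF.succPlus (α : LPOF L) (X : Set ℕ) : Set ℕ := {y | ∃ x ∈ X, α.lt x y}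

/-- Immediate successors of a node. -/
def LPOF.succs (α : LPOF L) (x : ℕ) : Set ℕ :=
  {y | α.lt x y ∧ ¬ ∃ z, α.lt x z ∧ α.lt z y}

/-- The order ⊑ on LPOFs. -/
def LPOF.le (α β : LPOF L) : Prop :=
  α.N ⊆ β.N ∧
  (∀ x ∈ α.N, ∀ y, β.lt y x → y ∈ α.N) ∧
  (∀ x y, α.lt x y ↔ (β.lt x y ∧ x ∈ α.N ∧ y ∈ α.N)) ∧
  (∀ x ∈ α.N, α.lab x ≤ β.lab x) ∧
  (∀ x ∈ α.N, α.form x = β.form x) ∧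
  (∀ x ∈ α.N, α.succs x = β.succs x \ β.succPlus α.Bot)

/-! ## Generic suprema w.r.t. a relation -/

def isUB {X : Type*} (le : X → X → Prop) (D : Set X) (b : X) : Prop :=
  ∀ a ∈ D, le a b

def isSup {X : Type*} (le : X → X → Prop) (D : Set X) (b : X) : Prop :=
  isUB le D b ∧ ∀ c, isUB le D c → le b c

/-! ## Isomorphism and pomsets with formulae -/

def LPOF.iso (α β : LPOF L) : Prop :=
  ∃ f : ℕ → ℕ, Set.BijOn f α.N β.N ∧
    (∀ x ∈ α.N, ∀ y ∈ α.N, (α.lt x y ↔ β.lt (f x) (f y))) ∧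
    (∀ x ∈ α.N, β.lab (f x) = α.lab x) ∧
    (∀ x ∈ α.N, β.form (f x) = (α.form x).rename f)

def isoClass (α : LPOF L) : Set (LPOF L) := {β | α.iso β}

def Pom (L : Type) [LabelDCPO L] : Type := {A : Set (LPOF L) // ∃ α, A = isoClass α}

def pomLe (A B : Pom L) : Prop := ∀ α ∈ A.1, ∃ β ∈ B.1, LPOF.le α β

def PomFinite (A : Pom L) : Prop := ∀ α ∈ A.1, α.N.Finite

/-! ## The singleton ⊥ LPOF and the bottom pomset -/

def botLPOF (x₀ : ℕ) : LPOF L where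
  N := {x₀}
  lt _ _ := False
  lab _ := ⊥
  form _ := Form.top
  lt_mem h := h.elim
  lt_trans h _ := h.elim
  lt_irrefl _ h := h
  finPred _ := Set.finite_empty.subset (by intro y hy; exact hy.elim)
  finLevel _ := (Set.finite_singleton x₀).subset (fun y hy => hy.1)
  singleRoot := ⟨x₀, ⟨rfl, fun _ h => h⟩, fun r hr => hr.1⟩
  bot_maximal _ _ _ _ h := h
  form_sat _ _ := ⟨fun _ => true, by simp [Form.sat]⟩
  form_free _ _ y hy := by simp [Form.vars] at hy
  form_impl h := h.elim
  lab_junk _ _ := rfl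
  form_junk _ _ := rfl

def botPom : Pom L := ⟨isoClass (botLPOF 0), ⟨botLPOF 0, rfl⟩⟩

/-! ## Stuck formulae, extensible nodes, branches (semantically) -/

def stuckSat (α : LPOF L) (v : ℕ → Bool) : Prop :=
  ∃ x ∈ α.N, α.lab x = ⊥ ∧ (α.form x).sat v

def extens (α : LPOF L) : Set ℕ :=
  {x ∈ α.N | ¬ ∀ v, (α.form x).sat v → stuckSat α v}

def branchSat (α : LPOF L) (S : Set ℕ) (v : ℕ → Bool) : Prop :=
  ∀ x ∈ S, (α.form x).sat v

def IsBranch (α : LPOF L) (S : Set ℕ) : Prop :=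
  S.Nonempty ∧ S ⊆ extens α ∧
  (∀ v, branchSat α S v → ¬ stuckSat α v) ∧
  (∀ T, S ⊂ T → T ⊆ extens α → ¬ ∃ v, branchSat α T v)

def brSet (α : LPOF L) : Set ((ℕ → Bool) → Prop) :=
  {p | ∃ S, IsBranch α S ∧ p = branchSat α S}

/-! ## Truncation (relationally) -/

def IsTrunc (α : LPOF L) (n : ℕ) (β : LPOF L) : Prop :=
  β.N = {x ∈ α.N | levOf α.lt x ≤ n} ∧
  (∀ x y, β.lt x y ↔ (α.lt x y ∧ x ∈ β.N ∧ y ∈ β.N)) ∧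
  (∀ x ∈ β.N, (levOf α.lt x < n → β.lab x = α.lab x) ∧
    (levOf α.lt x = n → β.lab x = ⊥)) ∧
  (∀ x ∈ β.N, β.form x = α.form x)

/-! ## Guarded choice (relationally) -/

def IsGuard (x₀ : ℕ) (ℓ : L) (α β γ : LPOF L) : Prop :=
  γ.N = insert x₀ (α.N ∪ β.N) ∧
  (∀ a b, γ.lt a b ↔ (α.lt a b ∨ β.lt a b ∨ (a = x₀ ∧ b ∈ α.N ∪ β.N))) ∧
  γ.lab x₀ = ℓ ∧
  (∀ y ∈ α.N, γ.lab y = α.lab y) ∧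
  (∀ y ∈ β.N, γ.lab y = β.lab y) ∧
  γ.form x₀ = Form.top ∧
  (∀ y ∈ α.N, γ.form y = Form.conj (α.form y) (Form.var x₀)) ∧
  (∀ y ∈ β.N, γ.form y = Form.conj (β.form y) (Form.neg (Form.var x₀)))

def setLe (A B : Set (LPOF L)) : Prop := ∀ α ∈ A, ∃ β ∈ B, LPOF.le α β

def guardSet (ℓ : L) (A B : Set (LPOF L)) : Set (LPOF L) :=
  {γ | ∃ x₀ α β, α ∈ A ∧ β ∈ B ∧ Disjoint α.N β.N ∧ x₀ ∉ α.N ∧ x₀ ∉ β.N ∧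
    IsGuard x₀ ℓ α β γ}

/-! ## Sequential composition (relationally) -/

def CopyFn (α β : LPOF L) (f : Set ℕ → LPOF L) : Prop :=
  ∀ S, IsBranch α S →
    β.iso (f S) ∧ Disjoint (f S).N α.N ∧
    ∀ S', IsBranch α S' → S ≠ S' → Disjoint (f S).N (f S').N

def IsSeq (α β : LPOF L) (f : Set ℕ → LPOF L) (γ : LPOF L) : Prop :=
  (γ.N = α.N ∪ ⋃ S ∈ {S : Set ℕ | IsBranch α S}, (f S).N) ∧
  (∀ a b, γ.lt a b ↔ (α.lt a b ∨ ∃ S, IsBranch α S ∧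
    ((f S).lt a b ∨
      (a ∈ α.N ∧ (∀ v, branchSat α S v → (α.form a).sat v) ∧ b ∈ (f S).N)))) ∧
  (∀ x ∈ α.N, γ.lab x = α.lab x ∧ γ.form x = α.form x) ∧
  (∀ S, IsBranch α S → ∀ x ∈ (f S).N,
    γ.lab x = (f S).lab x ∧
    ∀ v, (γ.form x).sat v ↔ (((f S).form x).sat v ∧ branchSat α S v))

def seqSet (A B : Set (LPOF L)) : Set (LPOF L) :=
  {γ | ∃ α ∈ A, ∃ β ∈ B, ∃ f, CopyFn α β f ∧ IsSeq α β f γ}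

/-! ## Way-below and compactness in Pom(L) -/

def wayBelow (A B : Pom L) : Prop :=
  ∀ D : Set (Pom L), D.Nonempty → DirectedOn pomLe D →
    ∀ S, isSup pomLe D S → pomLe B S → ∃ C ∈ D, pomLe A C

def pomCompact (A : Pom L) : Prop := wayBelow A A


/-! ## Auxiliary development for stmt3 -/

namespace Stmt3Aux

open scoped Classical

variable {L : Type} [LabelDCPO L]

/-- The defining set for `levOf`. -/
def levSet (lt : ℕ → ℕ → Prop) (x : ℕ) : Set ℕ :=
  {n | ∃ c : ℕ → ℕ, c n = x ∧ ∀ i < n, lt (c i) (c (i + 1))}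

lemma levOf_eq (lt : ℕ → ℕ → Prop) (x : ℕ) : levOf lt x = sSup (levSet lt x) := rfl

lemma zero_mem_levSet (lt : ℕ → ℕ → Prop) (x : ℕ) : 0 ∈ levSet lt x :=
  ⟨fun _ => x, rfl, fun i hi => absurd hi (by omega)⟩

lemma chain_rel {lt : ℕ → ℕ → Prop} (htr : ∀ a b c, lt a b → lt b c → lt a c)
    {c : ℕ → ℕ} {n : ℕ} (hc : ∀ i < n, lt (c i) (c (i + 1))) :
    ∀ i j, i < j → j ≤ n → lt (c i) (c j) := by
  intro i j
  induction j with
  | zero => omega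
  | succ j ih =>
    intro hij hjn
    rcases Nat.lt_or_ge i j with h | h
    · exact htr _ _ _ (ih h (by omega)) (hc j (by omega))
    · have hij' : i = j := by omega
      subst hij'
      exact hc i (by omega)

lemma levSet_bdd (β : LPOF L) (x : ℕ) : BddAbove (levSet β.lt x) := by
  refine ⟨(β.finPred x).toFinset.card, ?_⟩
  rintro n ⟨c, hcx, hc⟩
  have htr : ∀ a b d : ℕ, β.lt a b → β.lt b d → β.lt a d := fun _ _ _ h1 h2 => β.lt_trans h1 h2
  have hmem : ∀ i ∈ Finset.range n, c i ∈ (β.finPred x).toFinset := by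
    intro i hi
    rw [Set.Finite.mem_toFinset]
    have := chain_rel htr hc i n (Finset.mem_range.1 hi) le_rfl
    rw [hcx] at this
    exact this
  have hinj : Set.InjOn c (Finset.range n) := by
    intro i hi j hj hij
    simp only [Finset.coe_range, Set.mem_Iio] at hi hj
    by_contra hne
    rcases Nat.lt_or_ge i j with h | h
    · have hlt := chain_rel htr hc i j h (by omega)
      rw [hij] at hlt
      exact β.lt_irrefl _ hlt
    · have hlt := chain_rel htr hc j i (by omega) (by omega)
      rw [← hij] at hlt
      exact β.lt_irrefl _ hlt
  calc n = (Finset.range n).card := (Finset.card_range n).symm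
    _ ≤ _ := Finset.card_le_card_of_injOn c hmem hinj

lemma levOf_mem (β : LPOF L) (x : ℕ) : levOf β.lt x ∈ levSet β.lt x := by
  rw [levOf_eq]
  exact Nat.sSup_mem ⟨0, zero_mem_levSet _ x⟩ (levSet_bdd β x)

lemma levOf_lt {β : LPOF L} {x y : ℕ} (h : β.lt x y) : levOf β.lt x < levOf β.lt y := by
  obtain ⟨c, hcx, hc⟩ := levOf_mem β x
  set k := levOf β.lt x with hk
  have hmem : k + 1 ∈ levSet β.lt y := by
    refine ⟨fun i => if i ≤ k then c i else y, if_neg (by omega), ?_⟩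
    intro i hi
    rcases Nat.lt_or_ge i k with h' | h'
    · show β.lt (if i ≤ k then c i else y) (if i + 1 ≤ k then c (i + 1) else y)
      rw [if_pos (by omega : i ≤ k), if_pos (by omega : i + 1 ≤ k)]
      exact hc i h'
    · have hik : i = k := by omega
      rw [hik]
      show β.lt (if k ≤ k then c k else y) (if k + 1 ≤ k then c (k + 1) else y)
      rw [if_pos le_rfl, if_neg (by omega : ¬ k + 1 ≤ k), hcx]
      exact h
  have := le_csSup (levSet_bdd β y) hmem
  rw [levOf_eq]
  omega

lemma levOf_congr {A : Set ℕ} {lt₁ lt₂ : ℕ → ℕ → Prop} {x : ℕ} (hx : x ∈ A)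
    (h12 : ∀ a b, lt₁ a b → lt₂ a b)
    (h21 : ∀ a b, b ∈ A → lt₂ a b → a ∈ A ∧ lt₁ a b) :
    levOf lt₂ x = levOf lt₁ x := by
  rw [levOf_eq, levOf_eq]
  congr 1
  ext n
  constructor
  · rintro ⟨c, hcx, hc⟩
    have hmem : ∀ k, k ≤ n → c (n - k) ∈ A := by
      intro k
      induction k with
      | zero => intro _; simpa [hcx]
      | succ k ih =>
        intro hk
        have h1 : n - (k + 1) < n := by omega
        have h2 : n - (k + 1) + 1 = n - k := by omega
        have h3 := hc _ h1
        rw [h2] at h3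
        exact (h21 _ _ (ih (by omega)) h3).1
    have hmem' : ∀ i, i ≤ n → c i ∈ A := by
      intro i hi
      have := hmem (n - i) (by omega)
      rwa [Nat.sub_sub_self hi] at this
    exact ⟨c, hcx, fun i hi => (h21 _ _ (hmem' (i + 1) (by omega)) (hc i hi)).2⟩
  · rintro ⟨c, hcx, hc⟩
    exact ⟨c, hcx, fun i hi => h12 _ _ (hc i hi)⟩

lemma root_pres {α β : LPOF L} (h : α.le β) {r : ℕ}
    (hr : r ∈ α.N ∧ ∀ y, ¬ α.lt y r) : r ∈ β.N ∧ ∀ y, ¬ β.lt y r := by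
  refine ⟨h.1 hr.1, fun y hy => hr.2 y ?_⟩
  exact (h.2.2.1 y r).2 ⟨hy, h.2.1 r hr.1 y hy, hr.1⟩

lemma exists_imm_pred (β : LPOF L) {y : ℕ} (h : ∃ x, β.lt x y) :
    ∃ x, β.lt x y ∧ ¬ ∃ z, β.lt x z ∧ β.lt z y := by
  obtain ⟨x, hx, hmax⟩ := Set.Finite.exists_maximalFor (levOf β.lt) _ (β.finPred y) h
  refine ⟨x, hx, ?_⟩
  rintro ⟨z, hxz, hzy⟩
  have h1 := levOf_lt hxz
  have h2 := hmax (j := z) hzy (le_of_lt h1)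
  omega

lemma newNode {α β : LPOF L} (h : α.le β) :
    ∀ y, y ∈ β.N → y ∉ α.N → ∃ b, b ∈ α.N ∧ α.lab b = ⊥ ∧ β.lt b y := by
  obtain ⟨r, hr, _⟩ := α.singleRoot
  have hrβ := root_pres h hr
  obtain ⟨r', hr', hr'u⟩ := β.singleRoot
  have hrr' : r = r' := hr'u r hrβ
  suffices H : ∀ m, ∀ y, levOf β.lt y < m → y ∈ β.N → y ∉ α.N →
      ∃ b, b ∈ α.N ∧ α.lab b = ⊥ ∧ β.lt b y by
    intro y hy hy'
    exact H (levOf β.lt y + 1) y (by omega) hy hy'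
  intro m
  induction m with
  | zero => intro y hy; omega
  | succ m ih =>
    intro y hlev hyβ hyα
    have hpred : ∃ x, β.lt x y := by
      by_contra hnp
      push_neg at hnp
      have hyr : y = r' := hr'u y ⟨hyβ, hnp⟩
      exact hyα (by rw [hyr, ← hrr']; exact hr.1)
    obtain ⟨x, hxy, himm⟩ := exists_imm_pred β hpred
    by_cases hxα : x ∈ α.N
    · have hsucc := h.2.2.2.2.2 x hxα
      have hyin : y ∈ β.succs x := ⟨hxy, himm⟩
      have hynot : y ∉ α.succs x := fun hc => hyα (α.lt_mem hc.1).2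
      rw [hsucc] at hynot
      have hyP : y ∈ β.succPlus α.Bot := by
        by_contra hc
        exact hynot ⟨hyin, hc⟩
      obtain ⟨b, hb, hlt⟩ := hyP
      exact ⟨b, hb.1, hb.2, hlt⟩
    · have hxβ := (β.lt_mem hxy).1
      have hxm : levOf β.lt x < m := by
        have := levOf_lt hxy
        omega
      obtain ⟨b, h1, h2, h3⟩ := ih x hxm hxβ hxα
      exact ⟨b, h1, h2, β.lt_trans h3 hxy⟩

/-! ### The componentwise supremum -/

def sN (D : Set (LPOF L)) : Set ℕ := ⋃ β ∈ D, β.N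

def slt (D : Set (LPOF L)) (x y : ℕ) : Prop := ∃ β ∈ D, β.lt x y

lemma mem_sN {D : Set (LPOF L)} {x : ℕ} : x ∈ sN D ↔ ∃ β ∈ D, x ∈ β.N := by
  simp [sN]

lemma pred_lower {D : Set (LPOF L)} (hdir : DirectedOn LPOF.le D) {α : LPOF L}
    (hα : α ∈ D) {x y : ℕ} (hx : x ∈ α.N) (hxy : slt D y x) : y ∈ α.N ∧ α.lt y x := by
  obtain ⟨β, hβ, hlt⟩ := hxy
  obtain ⟨γ, hγ, hαγ, hβγ⟩ := hdir α hα β hβ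
  have hγlt : γ.lt y x := ((hβγ.2.2.1 y x).1 hlt).1
  have hyα : y ∈ α.N := hαγ.2.1 x hx y hγlt
  exact ⟨hyα, (hαγ.2.2.1 y x).2 ⟨hγlt, hyα, hx⟩⟩

lemma form_agree {D : Set (LPOF L)} (hdir : DirectedOn LPOF.le D) {α β : LPOF L}
    (hα : α ∈ D) (hβ : β ∈ D) {x : ℕ} (hxα : x ∈ α.N) (hxβ : x ∈ β.N) :
    α.form x = β.form x := by
  obtain ⟨γ, hγ, hαγ, hβγ⟩ := hdir α hα β hβ
  rw [hαγ.2.2.2.2.1 x hxα, hβγ.2.2.2.2.1 x hxβ]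

def sLabSet (D : Set (LPOF L)) (x : ℕ) : Set L := {l | ∃ β ∈ D, x ∈ β.N ∧ β.lab x = l}

lemma sLabSet_lub {D : Set (LPOF L)} (hdir : DirectedOn LPOF.le D) {x : ℕ}
    (hx : x ∈ sN D) : ∃ b, IsLUB (sLabSet D x) b := by
  obtain ⟨β, hβ, hxβ⟩ := mem_sN.1 hx
  apply LabelDCPO.directedSupExists
  · exact ⟨β.lab x, β, hβ, hxβ, rfl⟩
  · rintro l₁ ⟨β₁, hβ₁, hx₁, rfl⟩ l₂ ⟨β₂, hβ₂, hx₂, rfl⟩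
    obtain ⟨γ, hγ, h₁, h₂⟩ := hdir β₁ hβ₁ β₂ hβ₂
    exact ⟨γ.lab x, ⟨γ, hγ, h₁.1 hx₁, rfl⟩, h₁.2.2.2.1 x hx₁, h₂.2.2.2.1 x hx₂⟩

noncomputable def sLab (D : Set (LPOF L)) (hdir : DirectedOn LPOF.le D) (x : ℕ) : L :=
  if hx : x ∈ sN D then (sLabSet_lub hdir hx).choose else ⊥

lemma sLab_isLUB {D : Set (LPOF L)} (hdir : DirectedOn LPOF.le D) {x : ℕ}
    (hx : x ∈ sN D) : IsLUB (sLabSet D x) (sLab D hdir x) := by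
  rw [sLab, dif_pos hx]
  exact (sLabSet_lub hdir hx).choose_spec

lemma le_sLab {D : Set (LPOF L)} (hdir : DirectedOn LPOF.le D) {β : LPOF L}
    (hβ : β ∈ D) {x : ℕ} (hx : x ∈ β.N) : β.lab x ≤ sLab D hdir x :=
  (sLab_isLUB hdir (mem_sN.2 ⟨β, hβ, hx⟩)).1 ⟨β, hβ, hx, rfl⟩

lemma sLab_eq_bot {D : Set (LPOF L)} (hdir : DirectedOn LPOF.le D) {x : ℕ}
    (h : sLab D hdir x = ⊥) {β : LPOF L} (hβ : β ∈ D) (hxβ : x ∈ β.N) :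
    β.lab x = ⊥ :=
  le_bot_iff.1 (h ▸ le_sLab hdir hβ hxβ)

lemma sLab_ne_bot {D : Set (LPOF L)} (hdir : DirectedOn LPOF.le D) {x : ℕ}
    (hx : x ∈ sN D) (h : sLab D hdir x ≠ ⊥) : ∃ β ∈ D, x ∈ β.N ∧ β.lab x ≠ ⊥ := by
  by_contra hc
  push_neg at hc
  apply h
  have hub : ∀ l ∈ sLabSet D x, l ≤ ⊥ := by
    rintro l ⟨β, hβ, hxβ, rfl⟩
    exact (hc β hβ hxβ).le
  exact le_bot_iff.1 ((sLab_isLUB hdir hx).2 hub)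

noncomputable def sForm (D : Set (LPOF L)) (x : ℕ) : Form :=
  if hx : ∃ β ∈ D, x ∈ β.N then hx.choose.form x else Form.top

lemma sForm_eq {D : Set (LPOF L)} (hdir : DirectedOn LPOF.le D) {β : LPOF L} (hβ : β ∈ D)
    {x : ℕ} (hx : x ∈ β.N) : sForm D x = β.form x := by
  have hex : ∃ β ∈ D, x ∈ β.N := ⟨β, hβ, hx⟩
  rw [sForm, dif_pos hex]
  exact form_agree hdir hex.choose_spec.1 hβ hex.choose_spec.2 hx

lemma lev_transfer {D : Set (LPOF L)} (hdir : DirectedOn LPOF.le D) {α : LPOF L}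
    (hα : α ∈ D) {x : ℕ} (hx : x ∈ α.N) : levOf (slt D) x = levOf α.lt x :=
  levOf_congr hx (fun a b h => ⟨α, hα, h⟩) (fun a b hb h => pred_lower hdir hα hb h)

lemma sroot {D : Set (LPOF L)} (hne : D.Nonempty) (hdir : DirectedOn LPOF.le D) :
    ∃! r, r ∈ sN D ∧ ∀ y, ¬ slt D y r := by
  obtain ⟨α₀, hα₀⟩ := hne
  obtain ⟨r, hr, _⟩ := α₀.singleRoot
  refine ⟨r, ⟨mem_sN.2 ⟨α₀, hα₀, hr.1⟩, ?_⟩, ?_⟩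
  · rintro y ⟨β, hβ, hlt⟩
    obtain ⟨γ, hγ, h₀γ, hβγ⟩ := hdir α₀ hα₀ β hβ
    have hγlt : γ.lt y r := ((hβγ.2.2.1 y r).1 hlt).1
    exact (root_pres h₀γ hr).2 y hγlt
  · rintro r' ⟨hr'N, hr'm⟩
    obtain ⟨α, hα, hr'α⟩ := mem_sN.1 hr'N
    obtain ⟨γ, hγ, hαγ, h₀γ⟩ := hdir α hα α₀ hα₀
    obtain ⟨rγ, hrγ, hrγu⟩ := γ.singleRoot
    have h1 : r' = rγ :=
      hrγu r' (root_pres hαγ ⟨hr'α, fun y hy => hr'm y ⟨α, hα, hy⟩⟩)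
    have h2 : r = rγ := hrγu r (root_pres h₀γ hr)
    rw [h1, h2]

lemma sfinLevel {D : Set (LPOF L)} (hne : D.Nonempty) (hdir : DirectedOn LPOF.le D) :
    ∀ n, {x ∈ sN D | levOf (slt D) x ≤ n}.Finite := by
  intro n
  induction n with
  | zero =>
    obtain ⟨r, _, hru⟩ := sroot hne hdir
    apply Set.Finite.subset (Set.finite_singleton r)
    rintro x ⟨hxN, hlev⟩
    obtain ⟨α, hα, hxα⟩ := mem_sN.1 hxN
    refine hru x ⟨hxN, fun y hy => ?_⟩
    have h1 := pred_lower hdir hα hxα hy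
    have h2 := levOf_lt h1.2
    have h3 := lev_transfer hdir hα hxα
    omega
  | succ n ih =>
    have hS : {x ∈ sN D | levOf (slt D) x = n + 1}.Finite := by
      by_contra hS
      set S := {x ∈ sN D | levOf (slt D) x = n + 1} with hSdef
      have step : ∀ g : {g : LPOF L // g ∈ D}, ∃ g' : {g : LPOF L // g ∈ D},
          g.1.le g'.1 ∧ ∃ y, y ∈ S ∧ y ∉ g.1.N ∧ y ∈ g'.1.N := by
        rintro ⟨g, hg⟩
        have hfin : (S ∩ g.N).Finite := by
          apply Set.Finite.subset (g.finLevel (n + 1))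
          rintro x ⟨⟨hxN, hlev⟩, hxg⟩
          refine ⟨hxg, ?_⟩
          rw [← lev_transfer hdir hg hxg]
          exact hlev
        obtain ⟨y, hyS, hy'⟩ := (Set.Infinite.diff hS hfin).nonempty
        have hyg : y ∉ g.N := fun hc => hy' ⟨hyS, hc⟩
        obtain ⟨β, hβ, hyβ⟩ := mem_sN.1 hyS.1
        obtain ⟨γ, hγ, hgγ, hβγ⟩ := hdir g hg β hβ
        exact ⟨⟨γ, hγ⟩, hgγ, y, hyS, hyg, hβγ.1 hyβ⟩
      choose F hleF yy hyS hyN hyN' using step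
      obtain ⟨α₀, hα₀⟩ := hne
      set f : ℕ → {g : LPOF L // g ∈ D} :=
        fun i => Nat.rec ⟨α₀, hα₀⟩ (fun _ g => F g) i with hf
      have hz : ∀ i, ∃ b, b ∈ (f i).1.N ∧ (f i).1.lab b = ⊥ ∧
          (f (i + 1)).1.lt b (yy (f i)) := by
        intro i
        exact newNode (hleF (f i)) (yy (f i)) (hyN' (f i)) (hyN (f i))
      choose z hzN hzB hzlt using hz
      have mono : ∀ i j, i ≤ j → ∀ w, w ∈ (f i).1.N →
          w ∈ (f j).1.N ∧ (f i).1.lab w ≤ (f j).1.lab w := by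
        intro i j hij
        induction j, hij using Nat.le_induction with
        | base => exact fun w hw => ⟨hw, le_rfl⟩
        | succ j hij ihm =>
          intro w hw
          obtain ⟨h1, h2⟩ := ihm w hw
          have hle' := hleF (f j)
          exact ⟨hle'.1 h1, h2.trans (hle'.2.2.2.1 w h1)⟩
      have hzP : ∀ i, z i ∈ {x ∈ sN D | levOf (slt D) x ≤ n} := by
        intro i
        have hz1 : z i ∈ (f (i + 1)).1.N := ((f (i + 1)).1.lt_mem (hzlt i)).1
        have hy1 : yy (f i) ∈ (f (i + 1)).1.N := hyN' (f i)
        have e1 : levOf (slt D) (z i) = levOf (f (i + 1)).1.lt (z i) :=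
          lev_transfer hdir (f (i + 1)).2 hz1
        have e2 : levOf (slt D) (yy (f i)) = levOf (f (i + 1)).1.lt (yy (f i)) :=
          lev_transfer hdir (f (i + 1)).2 hy1
        have e3 : levOf (slt D) (yy (f i)) = n + 1 := (hyS (f i)).2
        have e4 := levOf_lt (hzlt i)
        exact ⟨mem_sN.2 ⟨(f (i + 1)).1, (f (i + 1)).2, hz1⟩, by omega⟩
      have hinj : Function.Injective z := by
        have key : ∀ i j, i < j → z i ≠ z j := by
          intro i j hij heq
          have h1 : (f (i + 1)).1.lab (z i) ≠ ⊥ := by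
            intro hb
            exact (f (i + 1)).1.bot_maximal (z i) ((f (i + 1)).1.lt_mem (hzlt i)).1 hb
              _ (hzlt i)
          have h2 := (mono (i + 1) j (by omega) (z i) ((f (i + 1)).1.lt_mem (hzlt i)).1).2
          rw [heq, hzB j] at h2
          apply h1
          rw [heq]
          exact le_bot_iff.1 h2
        intro i j heq
        rcases lt_trichotomy i j with h | h | h
        · exact absurd heq (key i j h)
        · exact h
        · exact absurd heq.symm (key j i h)
      exact Set.infinite_of_injective_forall_mem hinj hzP ih
    have hsub : {x ∈ sN D | levOf (slt D) x ≤ n + 1} ⊆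
        {x ∈ sN D | levOf (slt D) x ≤ n} ∪ {x ∈ sN D | levOf (slt D) x = n + 1} := by
      rintro x ⟨h1, h2⟩
      rcases Nat.lt_or_ge (levOf (slt D) x) (n + 1) with h | h
      · exact Or.inl ⟨h1, by omega⟩
      · exact Or.inr ⟨h1, by omega⟩
    exact (ih.union hS).subset hsub

noncomputable def supF (D : Set (LPOF L)) (hne : D.Nonempty)
    (hdir : DirectedOn LPOF.le D) : LPOF L where
  N := sN D
  lt := slt D
  lab := sLab D hdir
  form := sForm D
  lt_mem := by
    rintro x y ⟨β, hβ, h⟩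
    exact ⟨mem_sN.2 ⟨β, hβ, (β.lt_mem h).1⟩, mem_sN.2 ⟨β, hβ, (β.lt_mem h).2⟩⟩
  lt_trans := by
    rintro x y z ⟨β₁, hβ₁, h1⟩ ⟨β₂, hβ₂, h2⟩
    obtain ⟨γ, hγ, hg1, hg2⟩ := hdir β₁ hβ₁ β₂ hβ₂
    exact ⟨γ, hγ, γ.lt_trans ((hg1.2.2.1 x y).1 h1).1 ((hg2.2.2.1 y z).1 h2).1⟩
  lt_irrefl := by
    rintro x ⟨β, _, h⟩
    exact β.lt_irrefl x h
  finPred := by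
    intro x
    by_cases hx : x ∈ sN D
    · obtain ⟨α, hα, hxα⟩ := mem_sN.1 hx
      apply (α.finPred x).subset
      intro y hy
      exact (pred_lower hdir hα hxα hy).2
    · apply Set.finite_empty.subset
      rintro y ⟨β, hβ, h⟩
      exact hx (mem_sN.2 ⟨β, hβ, (β.lt_mem h).2⟩)
  finLevel := by
    intro n
    apply (sfinLevel hne hdir n).subset
    rintro x ⟨h1, h2⟩
    exact ⟨h1, le_of_eq h2⟩
  singleRoot := sroot hne hdir
  bot_maximal := by
    rintro x hx hlab y ⟨β, hβ, hlt⟩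
    have hxβ : x ∈ β.N := (β.lt_mem hlt).1
    exact β.bot_maximal x hxβ (sLab_eq_bot hdir hlab hβ hxβ) y hlt
  form_sat := by
    intro x hx
    obtain ⟨β, hβ, hxβ⟩ := mem_sN.1 hx
    rw [sForm_eq hdir hβ hxβ]
    exact β.form_sat x hxβ
  form_free := by
    intro x hx y hy
    obtain ⟨β, hβ, hxβ⟩ := mem_sN.1 hx
    rw [sForm_eq hdir hβ hxβ] at hy
    exact ⟨β, hβ, β.form_free x hxβ y hy⟩
  form_impl := by
    rintro x y ⟨β, hβ, hlt⟩ v hv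
    have h1 := (β.lt_mem hlt).1
    have h2 := (β.lt_mem hlt).2
    rw [sForm_eq hdir hβ h2] at hv
    rw [sForm_eq hdir hβ h1]
    exact β.form_impl hlt v hv
  lab_junk := by
    intro x hx
    rw [sLab, dif_neg hx]
  form_junk := by
    intro x hx
    rw [sForm, dif_neg]
    intro hc
    exact hx (mem_sN.2 hc)

variable {D : Set (LPOF L)} {hne : D.Nonempty} {hdir : DirectedOn LPOF.le D}

@[simp] lemma supF_N : (supF D hne hdir).N = sN D := rfl
@[simp] lemma supF_lt : (supF D hne hdir).lt = slt D := rfl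
@[simp] lemma supF_lab : (supF D hne hdir).lab = sLab D hdir := rfl
@[simp] lemma supF_form : (supF D hne hdir).form = sForm D := rfl

lemma finite_ub (hne : D.Nonempty) (hdir : DirectedOn LPOF.le D) :
    ∀ F : Set (LPOF L), F.Finite → F ⊆ D →
      ∃ γ ∈ D, ∀ α ∈ F, α.N ⊆ γ.N ∧ ∀ x ∈ α.N, α.lab x ≤ γ.lab x := by
  intro F hF
  refine Set.Finite.induction_on
    (motive := fun F _ => F ⊆ D →
      ∃ γ ∈ D, ∀ α ∈ F, α.N ⊆ γ.N ∧ ∀ x ∈ α.N, α.lab x ≤ γ.lab x) F hF ?_ ?_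
  · intro _
    obtain ⟨γ, hγ⟩ := hne
    exact ⟨γ, hγ, by simp⟩
  · intro a s ha hs ih hFD
    obtain ⟨γ₁, hγ₁, h₁⟩ := ih ((Set.subset_insert a s).trans hFD)
    obtain ⟨γ, hγ, haγ, hγ₁γ⟩ := hdir a (hFD (Set.mem_insert a s)) γ₁ hγ₁
    refine ⟨γ, hγ, ?_⟩
    intro α hα
    rcases Set.mem_insert_iff.1 hα with rfl | hα
    · exact ⟨haγ.1, fun x hx => haγ.2.2.2.1 x hx⟩
    · obtain ⟨hsub, hlab⟩ := h₁ α hα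
      exact ⟨hsub.trans hγ₁γ.1, fun x hx => (hlab x hx).trans (hγ₁γ.2.2.2.1 x (hsub hx))⟩

lemma supNew (hne : D.Nonempty) (hdir : DirectedOn LPOF.le D)
    {c : LPOF L} (hub : ∀ α ∈ D, α.le c) {y : ℕ} (hy : y ∈ c.N) (hy' : y ∉ sN D) :
    ∃ b, b ∈ sN D ∧ sLab D hdir b = ⊥ ∧ c.lt b y := by
  by_contra hcon
  push_neg at hcon
  set Pb := {z ∈ sN D | c.lt z y} with hPb
  have hPbfin : Pb.Finite := (c.finPred y).subset (fun z hz => hz.2)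
  have hchoice : ∀ z : ℕ, ∃ β, β ∈ D ∧ (z ∈ Pb → z ∈ β.N ∧ β.lab z ≠ ⊥) := by
    intro z
    by_cases hz : z ∈ Pb
    · have hnb : sLab D hdir z ≠ ⊥ := fun hb => hcon z hz.1 hb hz.2
      obtain ⟨β, hβ, h1, h2⟩ := sLab_ne_bot hdir hz.1 hnb
      exact ⟨β, hβ, fun _ => ⟨h1, h2⟩⟩
    · obtain ⟨β, hβ⟩ := hne
      exact ⟨β, hβ, fun h => absurd h hz⟩
  choose g hgD hgP using hchoice
  obtain ⟨γ, hγ, hγub⟩ := finite_ub hne hdir (g '' Pb) (hPbfin.image g)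
    (by rintro β ⟨z, _, rfl⟩; exact hgD z)
  have hyγ : y ∉ γ.N := fun hc => hy' (mem_sN.2 ⟨γ, hγ, hc⟩)
  obtain ⟨b, hbγ, hbB, hblt⟩ := newNode (hub γ hγ) y hy hyγ
  have hbP : b ∈ Pb := ⟨mem_sN.2 ⟨γ, hγ, hbγ⟩, hblt⟩
  obtain ⟨hbg, hbgB⟩ := hgP b hbP
  have hle := (hγub (g b) ⟨b, hbP, rfl⟩).2 b hbg
  rw [hbB] at hle
  exact hbgB (le_bot_iff.1 hle)

lemma sup_ub (hne : D.Nonempty) (hdir : DirectedOn LPOF.le D) :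
    ∀ α ∈ D, α.le (supF D hne hdir) := by
  intro α hα
  refine ⟨?_, ?_, ?_, ?_, ?_, ?_⟩
  · intro x hx
    exact mem_sN.2 ⟨α, hα, hx⟩
  · intro x hx y hy
    exact (pred_lower hdir hα hx hy).1
  · intro x y
    constructor
    · intro h
      exact ⟨⟨α, hα, h⟩, (α.lt_mem h).1, (α.lt_mem h).2⟩
    · rintro ⟨hs, hx, hy⟩
      exact (pred_lower hdir hα hy hs).2
  · intro x hx
    exact le_sLab hdir hα hx
  · intro x hx
    exact (sForm_eq hdir hα hx).symm
  · intro x hx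
    ext y
    simp only [LPOF.succs, LPOF.succPlus, LPOF.Bot, Set.mem_setOf_eq, Set.mem_diff,
      supF_lt, supF_N]
    constructor
    · rintro ⟨hxy, himm⟩
      refine ⟨⟨⟨α, hα, hxy⟩, ?_⟩, ?_⟩
      · rintro ⟨z, hz1, hz2⟩
        have h1 := pred_lower hdir hα (α.lt_mem hxy).2 hz2
        have h2 := pred_lower hdir hα h1.1 hz1
        exact himm ⟨z, h2.2, h1.2⟩
      · rintro ⟨b, hb, hlt⟩
        have h1 := pred_lower hdir hα (α.lt_mem hxy).2 hlt
        exact α.bot_maximal b hb.1 hb.2 y h1.2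
    · rintro ⟨⟨hxy, himm⟩, hnb⟩
      obtain ⟨β, hβ, hβxy⟩ := hxy
      obtain ⟨γ, hγ, hαγ, hβγ⟩ := hdir α hα β hβ
      have hγxy : γ.lt x y := ((hβγ.2.2.1 x y).1 hβxy).1
      have hyα : y ∈ α.N := by
        by_contra hyα
        obtain ⟨b, hb1, hb2, hb3⟩ := newNode hαγ y (γ.lt_mem hγxy).2 hyα
        exact hnb ⟨b, ⟨hb1, hb2⟩, ⟨γ, hγ, hb3⟩⟩
      refine ⟨(hαγ.2.2.1 x y).2 ⟨hγxy, hx, hyα⟩, ?_⟩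
      rintro ⟨z, hz1, hz2⟩
      exact himm ⟨z, ⟨α, hα, hz1⟩, ⟨α, hα, hz2⟩⟩

lemma slt_of_ub (hdir : DirectedOn LPOF.le D) {c : LPOF L} (hub : ∀ α ∈ D, α.le c)
    {a b : ℕ} (h : c.lt a b) (ha : a ∈ sN D) (hb : b ∈ sN D) : slt D a b := by
  obtain ⟨β₁, hβ₁, ha₁⟩ := mem_sN.1 ha
  obtain ⟨β₂, hβ₂, hb₂⟩ := mem_sN.1 hb
  obtain ⟨γ, hγ, h₁, h₂⟩ := hdir β₁ hβ₁ β₂ hβ₂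
  exact ⟨γ, hγ, ((hub γ hγ).2.2.1 a b).2 ⟨h, h₁.1 ha₁, h₂.1 hb₂⟩⟩

lemma sup_least (hne : D.Nonempty) (hdir : DirectedOn LPOF.le D)
    {c : LPOF L} (hub : ∀ α ∈ D, α.le c) : (supF D hne hdir).le c := by
  refine ⟨?_, ?_, ?_, ?_, ?_, ?_⟩
  · intro x hx
    obtain ⟨β, hβ, hxβ⟩ := mem_sN.1 hx
    exact (hub β hβ).1 hxβ
  · intro x hx y hy
    obtain ⟨β, hβ, hxβ⟩ := mem_sN.1 hx
    exact mem_sN.2 ⟨β, hβ, (hub β hβ).2.1 x hxβ y hy⟩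
  · intro x y
    constructor
    · rintro ⟨β, hβ, h⟩
      exact ⟨(((hub β hβ).2.2.1 x y).1 h).1, mem_sN.2 ⟨β, hβ, (β.lt_mem h).1⟩,
        mem_sN.2 ⟨β, hβ, (β.lt_mem h).2⟩⟩
    · rintro ⟨hc, hx, hy⟩
      exact slt_of_ub hdir hub hc hx hy
  · intro x hx
    apply (sLab_isLUB hdir hx).2
    rintro l ⟨β, hβ, hxβ, rfl⟩
    exact (hub β hβ).2.2.2.1 x hxβ
  · intro x hx
    obtain ⟨β, hβ, hxβ⟩ := mem_sN.1 hx
    show sForm D x = c.form x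
    rw [sForm_eq hdir hβ hxβ]
    exact (hub β hβ).2.2.2.2.1 x hxβ
  · intro x hx
    ext y
    simp only [LPOF.succs, LPOF.succPlus, LPOF.Bot, Set.mem_setOf_eq, Set.mem_diff,
      supF_lt, supF_N, supF_lab]
    constructor
    · rintro ⟨hxy, himm⟩
      have hyN : y ∈ sN D := by
        obtain ⟨β, hβ, h⟩ := hxy
        exact mem_sN.2 ⟨β, hβ, (β.lt_mem h).2⟩
      have hcxy : c.lt x y := by
        obtain ⟨β, hβ, h⟩ := hxy
        exact (((hub β hβ).2.2.1 x y).1 h).1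
      refine ⟨⟨hcxy, ?_⟩, ?_⟩
      · rintro ⟨z, hz1, hz2⟩
        have hzN : z ∈ sN D := by
          obtain ⟨βy, hβy, hyβ⟩ := mem_sN.1 hyN
          exact mem_sN.2 ⟨βy, hβy, (hub βy hβy).2.1 y hyβ z hz2⟩
        exact himm ⟨z, slt_of_ub hdir hub hz1 hx hzN, slt_of_ub hdir hub hz2 hzN hyN⟩
      · rintro ⟨b, hb, hlt⟩
        have hsb : slt D b y := slt_of_ub hdir hub hlt hb.1 hyN
        obtain ⟨β, hβ, h⟩ := hsb
        exact β.bot_maximal b (β.lt_mem h).1 (sLab_eq_bot hdir hb.2 hβ (β.lt_mem h).1)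
          y h
    · rintro ⟨⟨hxy, himm⟩, hnb⟩
      have hyN : y ∈ sN D := by
        by_contra hyN
        obtain ⟨b, hb1, hb2, hb3⟩ := supNew hne hdir hub (c.lt_mem hxy).2 hyN
        exact hnb ⟨b, ⟨hb1, hb2⟩, hb3⟩
      refine ⟨slt_of_ub hdir hub hxy hx hyN, ?_⟩
      rintro ⟨z, hz1, hz2⟩
      obtain ⟨β₁, hβ₁, h1⟩ := hz1
      obtain ⟨β₂, hβ₂, h2⟩ := hz2
      exact himm ⟨z, (((hub β₁ hβ₁).2.2.1 x z).1 h1).1, (((hub β₂ hβ₂).2.2.1 z y).1 h2).1⟩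

end Stmt3Aux


/-- every nonempty directed set of LPOFs has a supremum, computed
componentwise. -/
theorem stmt3 {L : Type} [LabelDCPO L] (D : Set (LPOF L))
    (hne : D.Nonempty) (hdir : DirectedOn LPOF.le D) :
    ∃ γ : LPOF L,
      isSup LPOF.le D γ ∧
      (γ.N = ⋃ β ∈ D, β.N) ∧
      (∀ x y, γ.lt x y ↔ ∃ β ∈ D, β.lt x y) ∧
      (∀ x ∈ γ.N, IsLUB {l : L | ∃ β ∈ D, x ∈ β.N ∧ β.lab x = l} (γ.lab x)) ∧
      (∀ β ∈ D, ∀ x ∈ β.N, γ.form x = β.form x) := by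
  refine ⟨Stmt3Aux.supF D hne hdir,
    ⟨Stmt3Aux.sup_ub hne hdir, fun c hc => Stmt3Aux.sup_least hne hdir hc⟩,
    rfl, fun x y => Iff.rfl, ?_, ?_⟩
  · intro x hx
    exact Stmt3Aux.sLab_isLUB hdir hx
  · intro β hβ x hx
    exact Stmt3Aux.sForm_eq hdir hβ hx
end

section
/- Truncation of LPOFs is Scott continuous: for any directed set D of LPOFs and any n, sup{trunc(β, n) | β ∈ D} exists and equals trunc(sup D, n). -/
variable {L : Type} [LabelDCPO L]

/-! ### Auxiliary development -/

section Lev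

/-- The set of lengths of strict chains ending at `x`. -/
def chainSet (lt : ℕ → ℕ → Prop) (x : ℕ) : Set ℕ :=
  {n | ∃ c : ℕ → ℕ, c n = x ∧ ∀ i < n, lt (c i) (c (i + 1))}

lemma levOf_def (lt : ℕ → ℕ → Prop) (x : ℕ) : levOf lt x = sSup (chainSet lt x) := rfl

lemma chainSet_zero (lt : ℕ → ℕ → Prop) (x : ℕ) : 0 ∈ chainSet lt x :=
  ⟨fun _ => x, rfl, fun i hi => absurd hi (Nat.not_lt_zero i)⟩

variable {lt : ℕ → ℕ → Prop}

lemma chain_lt (htr : Transitive lt)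
    {c : ℕ → ℕ} {n : ℕ} (hc : ∀ i < n, lt (c i) (c (i + 1))) :
    ∀ j ≤ n, ∀ i < j, lt (c i) (c j) := by
  intro j hj
  induction j with
  | zero => intro i hi; omega
  | succ m ih =>
    intro i hi
    rcases Nat.lt_succ_iff_lt_or_eq.mp hi with h | h
    · exact htr (ih (by omega) i h) (hc m (by omega))
    · subst h; exact hc i (by omega)

lemma chainSet_bddAbove (htr : Transitive lt)
    (hirr : ∀ x, ¬ lt x x) (hfin : ∀ x, {y | lt y x}.Finite) (x : ℕ) :
    BddAbove (chainSet lt x) := by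
  refine ⟨(hfin x).toFinset.card, ?_⟩
  rintro k ⟨c, hck, hc⟩
  have hmap : ∀ i ∈ Finset.range k, c i ∈ (hfin x).toFinset := by
    intro i hi
    simp only [Finset.mem_range] at hi
    have := chain_lt htr hc k le_rfl i hi
    rw [hck] at this
    simpa using this
  have hinj : Set.InjOn c (Finset.range k) := by
    intro i hi j hj hij
    simp only [Finset.coe_range, Set.mem_Iio] at hi hj
    by_contra hne
    rcases Nat.lt_or_ge i j with h | h
    · exact hirr (c j) (hij ▸ chain_lt htr hc j (by omega) i h)
    · have h' : j < i := by omega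
      exact hirr (c i) (hij ▸ chain_lt htr hc i (by omega) j h')
  calc k = (Finset.range k).card := by simp
    _ ≤ _ := Finset.card_le_card_of_injOn c hmap hinj

lemma levOf_mem (htr : Transitive lt)
    (hirr : ∀ x, ¬ lt x x) (hfin : ∀ x, {y | lt y x}.Finite) (x : ℕ) :
    levOf lt x ∈ chainSet lt x :=
  Nat.sSup_mem ⟨0, chainSet_zero lt x⟩ (chainSet_bddAbove htr hirr hfin x)

lemma le_levOf (htr : Transitive lt)
    (hirr : ∀ x, ¬ lt x x) (hfin : ∀ x, {y | lt y x}.Finite) {x k : ℕ}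
    (hk : k ∈ chainSet lt x) : k ≤ levOf lt x :=
  le_csSup (chainSet_bddAbove htr hirr hfin x) hk

lemma levOf_lt_of_lt (htr : Transitive lt)
    (hirr : ∀ x, ¬ lt x x) (hfin : ∀ x, {y | lt y x}.Finite) {w x : ℕ}
    (h : lt w x) : levOf lt w < levOf lt x := by
  obtain ⟨c, hck, hc⟩ := levOf_mem htr hirr hfin w
  set k := levOf lt w with hk
  have hmem : k + 1 ∈ chainSet lt x := by
    refine ⟨fun i => if i = k + 1 then x else c i, by simp, ?_⟩
    intro i hi
    rcases Nat.lt_succ_iff_lt_or_eq.mp hi with h' | h'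
    · have h1 : i ≠ k + 1 := by omega
      have h2 : i + 1 ≠ k + 1 := by omega
      simp only [h1, h2, if_false]
      exact hc i h'
    · beta_reduce
      rw [if_neg (by omega : ¬ i = k + 1), if_pos (by omega : i + 1 = k + 1), h', hck]
      exact h
  have := le_levOf htr hirr hfin hmem
  omega

lemma not_lt_of_levOf_zero (htr : Transitive lt)
    (hirr : ∀ x, ¬ lt x x) (hfin : ∀ x, {y | lt y x}.Finite) {x : ℕ}
    (h : levOf lt x = 0) : ∀ y, ¬ lt y x := by
  intro y hy
  have := levOf_lt_of_lt htr hirr hfin hy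
  omega

/-- An immediate predecessor of maximal level exists below any node with a
predecessor. -/
lemma exists_immediate_pred (htr : Transitive lt)
    (hirr : ∀ x, ¬ lt x x) (hfin : ∀ x, {y | lt y x}.Finite) {x y : ℕ}
    (h : lt y x) : ∃ w, lt w x ∧ ¬ ∃ z, lt w z ∧ lt z x := by
  have hne : (hfin x).toFinset.Nonempty := ⟨y, by simpa using h⟩
  obtain ⟨w, hw, hmax⟩ := (hfin x).toFinset.exists_max_image (levOf lt) hne
  simp only [Set.Finite.mem_toFinset, Set.mem_setOf_eq] at hw
  refine ⟨w, hw, ?_⟩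
  rintro ⟨z, hwz, hzx⟩
  have hz : z ∈ (hfin x).toFinset := by simpa using hzx
  have h1 := hmax z hz
  have h2 := levOf_lt_of_lt htr hirr hfin hwz
  omega

lemma levOf_succ_exists (htr : Transitive lt)
    (hirr : ∀ x, ¬ lt x x) (hfin : ∀ x, {y | lt y x}.Finite) {x k : ℕ}
    (h : levOf lt x = k + 1) :
    ∃ w, lt w x ∧ (¬ ∃ z, lt w z ∧ lt z x) ∧ levOf lt w = k := by
  obtain ⟨c, hck, hc⟩ := levOf_mem htr hirr hfin x
  rw [h] at hck hc
  have hckx : lt (c k) x := hck ▸ hc k (by omega)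
  refine ⟨c k, hckx, ?_, ?_⟩
  · rintro ⟨z, h1, h2⟩
    -- build a chain of length k + 2 ending at x
    have hmem : k + 2 ∈ chainSet lt x := by
      refine ⟨fun i => if i < k + 1 then c i else if i = k + 1 then z else x, ?_, ?_⟩
      · simp
      · intro i hi
        rcases Nat.lt_or_ge i k with h' | h'
        · have e1 : i < k + 1 := by omega
          have e2 : i + 1 < k + 1 := by omega
          simp only [e1, e2, if_pos]
          exact hc i (by omega)
        · rcases Nat.lt_or_ge i (k + 1) with h'' | h''
          · have e0 : i = k := by omega
            beta_reduce
            rw [if_pos (by omega : i < k + 1), if_neg (by omega : ¬ i + 1 < k + 1),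
              if_pos (by omega : i + 1 = k + 1), e0]
            exact h1
          · have e0 : i = k + 1 := by omega
            beta_reduce
            rw [if_neg (by omega : ¬ i < k + 1), if_pos e0,
              if_neg (by omega : ¬ i + 1 < k + 1), if_neg (by omega : ¬ i + 1 = k + 1)]
            exact h2
    have := le_levOf htr hirr hfin hmem
    omega
  · have hge : k ≤ levOf lt (c k) :=
      le_levOf htr hirr hfin ⟨c, rfl, fun i hi => hc i (by omega)⟩
    have hlt : levOf lt (c k) < k + 1 := by
      have := levOf_lt_of_lt htr hirr hfin (hck ▸ hc k (by omega))
      omega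
    omega

/-- Transfer of chain sets across a sub-order situation. -/
lemma chainSet_eq_of_sub {ltA ltB : ℕ → ℕ → Prop} {S : Set ℕ} {x : ℕ}
    (hx : x ∈ S)
    (h1 : ∀ {a b}, ltA a b → ltB a b)
    (h2 : ∀ {a b}, ltB a b → b ∈ S → a ∈ S ∧ ltA a b) :
    chainSet ltA x = chainSet ltB x := by
  ext k
  constructor
  · rintro ⟨c, hck, hc⟩
    exact ⟨c, hck, fun i hi => h1 (hc i hi)⟩
  · rintro ⟨c, hck, hc⟩
    have hmem : ∀ d, c (k - d) ∈ S := by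
      intro d
      induction d with
      | zero => simpa using hck ▸ hx
      | succ m ih =>
        rcases Nat.lt_or_ge m k with h | h
        · have e : k - m = (k - (m + 1)) + 1 := by omega
          have hlt : k - (m + 1) < k := by omega
          have := hc (k - (m + 1)) hlt
          rw [← e] at this
          exact (h2 this (by rw [e] at ih; exact e ▸ ih)).1
        · have e : k - (m + 1) = k - m := by omega
          rw [e]; exact ih
    have hmem' : ∀ i ≤ k, c i ∈ S := by
      intro i hi
      have e : i = k - (k - i) := by omega
      rw [e]; exact hmem (k - i)
    exact ⟨c, hck, fun i hi => (h2 (hc i hi) (hmem' (i + 1) (by omega))).2⟩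

lemma levOf_eq_of_sub {ltA ltB : ℕ → ℕ → Prop} {S : Set ℕ} {x : ℕ}
    (hx : x ∈ S)
    (h1 : ∀ {a b}, ltA a b → ltB a b)
    (h2 : ∀ {a b}, ltB a b → b ∈ S → a ∈ S ∧ ltA a b) :
    levOf ltA x = levOf ltB x := by
  rw [levOf_def, levOf_def, chainSet_eq_of_sub hx h1 h2]

end Lev

section LeLemmas

variable {L : Type} [LabelDCPO L]

lemma LPOF.le.subN {α β : LPOF L} (h : α.le β) : α.N ⊆ β.N := h.1
lemma LPOF.le.down {α β : LPOF L} (h : α.le β) :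
    ∀ x ∈ α.N, ∀ y, β.lt y x → y ∈ α.N := h.2.1
lemma LPOF.le.ltIff {α β : LPOF L} (h : α.le β) :
    ∀ x y, α.lt x y ↔ (β.lt x y ∧ x ∈ α.N ∧ y ∈ α.N) := h.2.2.1
lemma LPOF.le.labLe {α β : LPOF L} (h : α.le β) :
    ∀ x ∈ α.N, α.lab x ≤ β.lab x := h.2.2.2.1
lemma LPOF.le.formEq {α β : LPOF L} (h : α.le β) :
    ∀ x ∈ α.N, α.form x = β.form x := h.2.2.2.2.1
lemma LPOF.le.succsEq {α β : LPOF L} (h : α.le β) :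
    ∀ x ∈ α.N, α.succs x = β.succs x \ β.succPlus α.Bot := h.2.2.2.2.2

lemma LPOF.trans' (α : LPOF L) : Transitive α.lt := fun _ _ _ h h' => α.lt_trans h h'

/-- Level transfer along `⊑`. -/
lemma LPOF.le.levEq {α β : LPOF L} (h : α.le β) {x : ℕ} (hx : x ∈ α.N) :
    levOf α.lt x = levOf β.lt x := by
  refine levOf_eq_of_sub (S := α.N) hx (fun {a b} hab => ((h.ltIff a b).1 hab).1) ?_
  intro a b hab hb
  have ha := h.down b hb a hab
  exact ⟨ha, (h.ltIff a b).2 ⟨hab, ha, hb⟩⟩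

/-- The root of `α` is preserved by `⊑`. -/
lemma LPOF.le.rootEq {α β : LPOF L} (h : α.le β) {r : ℕ}
    (hr : r ∈ α.N ∧ ∀ y, ¬ α.lt y r) : r ∈ β.N ∧ ∀ y, ¬ β.lt y r := by
  refine ⟨h.subN hr.1, fun y hy => ?_⟩
  have hyα : y ∈ α.N := h.down r hr.1 y hy
  exact hr.2 y ((h.ltIff y r).2 ⟨hy, hyα, hr.1⟩)

lemma LPOF.le_refl' (α : LPOF L) : α.le α := by
  refine ⟨subset_rfl, fun x _ y hy => (α.lt_mem hy).1,
    fun x y => ⟨fun h => ⟨h, α.lt_mem h⟩, fun h => h.1⟩,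
    fun x _ => le_rfl, fun x _ => rfl, fun x _ => ?_⟩
  ext y
  simp only [Set.mem_diff]
  refine ⟨fun hy => ⟨hy, ?_⟩, fun hy => hy.1⟩
  rintro ⟨z, ⟨hz1, hz2⟩, hlt⟩
  exact α.bot_maximal z hz1 hz2 y hlt

/-- Nodes of `β` missing from `α ⊑ β` lie above a `⊥`-node of `α`. -/
lemma LPOF.le.new_above_bot {α β : LPOF L} (h : α.le β) :
    ∀ k z, levOf β.lt z ≤ k → z ∈ β.N → z ∉ α.N → ∃ u ∈ α.Bot, β.lt u z := by
  have root_case : ∀ z, z ∈ β.N → (∀ y, ¬ β.lt y z) → z ∈ α.N := by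
    intro z hzN hzmin
    obtain ⟨r, ⟨hrN, hrmin⟩, _⟩ := α.singleRoot
    obtain ⟨rb, hrb, hrbu⟩ := β.singleRoot
    have h1 := h.rootEq ⟨hrN, hrmin⟩
    have e1 : r = rb := hrbu r h1
    have e2 : z = rb := hrbu z ⟨hzN, hzmin⟩
    rw [e2, ← e1]; exact hrN
  intro k
  induction k with
  | zero =>
    intro z hlev hzN hzA
    exfalso
    refine hzA (root_case z hzN ?_)
    exact not_lt_of_levOf_zero β.trans' β.lt_irrefl β.finPred (Nat.le_zero.mp hlev)
  | succ k ih =>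
    intro z hlev hzN hzA
    by_cases hpred : ∃ y, β.lt y z
    · obtain ⟨y, hy⟩ := hpred
      obtain ⟨w, hwz, hwim⟩ := exists_immediate_pred β.trans' β.lt_irrefl β.finPred hy
      by_cases hwA : w ∈ α.N
      · have hzsucc : z ∈ β.succs w := ⟨hwz, hwim⟩
        have hsucc := h.succsEq w hwA
        by_cases hsp : z ∈ β.succPlus α.Bot
        · exact hsp
        · have : z ∈ α.succs w := by rw [hsucc]; exact ⟨hzsucc, hsp⟩
          exact absurd (α.lt_mem this.1).2 hzA
      · have hlevw : levOf β.lt w ≤ k := by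
          have := levOf_lt_of_lt β.trans' β.lt_irrefl β.finPred hwz
          omega
        obtain ⟨u, hu, hult⟩ := ih w hlevw (β.lt_mem hwz).1 hwA
        exact ⟨u, hu, β.lt_trans hult hwz⟩
    · push_neg at hpred
      exact absurd (root_case z hzN hpred) hzA

lemma LPOF.le_trans' {α β γ : LPOF L} (h1 : α.le β) (h2 : β.le γ) : α.le γ := by
  refine ⟨h1.subN.trans h2.subN, ?_, ?_, ?_, ?_, ?_⟩
  · intro x hx y hy
    have hxβ := h1.subN hx
    have hyβ := h2.down x hxβ y hy
    exact h1.down x hx y ((h2.ltIff y x).2 ⟨hy, hyβ, hxβ⟩)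
  · intro x y
    rw [h1.ltIff x y]
    constructor
    · rintro ⟨hb, hx, hy⟩
      exact ⟨((h2.ltIff x y).1 hb).1, hx, hy⟩
    · rintro ⟨hg, hx, hy⟩
      exact ⟨(h2.ltIff x y).2 ⟨hg, h1.subN hx, h1.subN hy⟩, hx, hy⟩
  · intro x hx
    exact le_trans (h1.labLe x hx) (h2.labLe x (h1.subN hx))
  · intro x hx
    rw [h1.formEq x hx, h2.formEq x (h1.subN hx)]
  · intro x hx
    have e1 := h1.succsEq x hx
    have e2 := h2.succsEq x (h1.subN hx)
    ext y
    simp only [Set.mem_diff]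
    constructor
    · intro hy
      have hy1 : y ∈ β.succs x ∧ y ∉ β.succPlus α.Bot := by
        rw [e1] at hy; exact hy
      have hy2 : y ∈ γ.succs x ∧ y ∉ γ.succPlus β.Bot := by
        rw [e2] at hy1; exact ⟨hy1.1.1, hy1.1.2⟩
      refine ⟨hy2.1, ?_⟩
      rintro ⟨z, hz, hzy⟩
      have hyA : y ∈ α.N := (α.lt_mem hy.1).2
      exact hy1.2 ⟨z, hz, (h2.ltIff z y).2 ⟨hzy, h1.subN hz.1, h1.subN hyA⟩⟩
    · rintro ⟨hy, hysp⟩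
      have hyβ : y ∈ γ.succs x ∧ y ∉ γ.succPlus β.Bot := by
        refine ⟨hy, ?_⟩
        rintro ⟨z, ⟨hzN, hzlab⟩, hzy⟩
        by_cases hzA : z ∈ α.N
        · have : α.lab z = ⊥ := le_bot_iff.mp (hzlab ▸ h1.labLe z hzA)
          exact hysp ⟨z, ⟨hzA, this⟩, hzy⟩
        · obtain ⟨u, hu, hult⟩ := h1.new_above_bot (levOf β.lt z) z le_rfl hzN hzA
          exact hysp ⟨u, hu, γ.lt_trans ((h2.ltIff u z).1 hult).1 hzy⟩
      have hyb : y ∈ β.succs x := by rw [e2]; exact hyβ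
      have : y ∉ β.succPlus α.Bot := by
        rintro ⟨z, hz, hzy⟩
        exact hysp ⟨z, hz, ((h2.ltIff z y).1 hzy).1⟩
      rw [e1]; exact ⟨hyb, this⟩

end LeLemmas

section Trunc

variable {L : Type} [LabelDCPO L]

lemma root_lev_zero {α : LPOF L} {r : ℕ} (hr : ∀ y, ¬ α.lt y r) :
    levOf α.lt r = 0 := by
  obtain ⟨c, hck, hc⟩ := levOf_mem α.trans' α.lt_irrefl α.finPred r
  by_contra hne
  have hpos : 0 < levOf α.lt r := Nat.pos_of_ne_zero hne
  have := hc (levOf α.lt r - 1) (by omega)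
  rw [(by omega : levOf α.lt r - 1 + 1 = levOf α.lt r), hck] at this
  exact hr _ this

def truncN (α : LPOF L) (n : ℕ) : Set ℕ := {x | x ∈ α.N ∧ levOf α.lt x ≤ n}

def truncLt (α : LPOF L) (n : ℕ) (x y : ℕ) : Prop :=
  α.lt x y ∧ x ∈ truncN α n ∧ y ∈ truncN α n

lemma truncN_of_lt {α : LPOF L} {n x y : ℕ} (h : α.lt x y) (hy : y ∈ truncN α n) :
    x ∈ truncN α n := by
  refine ⟨(α.lt_mem h).1, ?_⟩
  have := levOf_lt_of_lt α.trans' α.lt_irrefl α.finPred h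
  have := hy.2
  omega

lemma truncLev {α : LPOF L} {n x : ℕ} (hx : x ∈ truncN α n) :
    levOf (truncLt α n) x = levOf α.lt x := by
  refine levOf_eq_of_sub (S := truncN α n) hx (fun {a b} hab => hab.1) ?_
  intro a b hab hb
  exact ⟨truncN_of_lt hab hb, hab, truncN_of_lt hab hb, hb⟩

open Classical in
noncomputable def mkTrunc (α : LPOF L) (n : ℕ) : LPOF L where
  N := truncN α n
  lt := truncLt α n
  lab x := if x ∈ α.N ∧ levOf α.lt x < n then α.lab x else ⊥
  form x := if x ∈ truncN α n then α.form x else Form.top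
  lt_mem h := ⟨h.2.1, h.2.2⟩
  lt_trans h h' := ⟨α.lt_trans h.1 h'.1, h.2.1, h'.2.2⟩
  lt_irrefl x h := α.lt_irrefl x h.1
  finPred x := (α.finPred x).subset (fun y hy => hy.1)
  finLevel m := by
    refine ((α.finLevel m).subset ?_)
    rintro x ⟨hx, hlev⟩
    exact ⟨hx.1, by rw [← truncLev hx]; exact hlev⟩
  singleRoot := by
    obtain ⟨r, ⟨hrN, hrmin⟩, hru⟩ := α.singleRoot
    have hrT : r ∈ truncN α n := ⟨hrN, by rw [root_lev_zero hrmin]; omega⟩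
    refine ⟨r, ⟨hrT, fun y hy => hrmin y hy.1⟩, ?_⟩
    rintro r' ⟨hr'T, hr'min⟩
    refine hru r' ⟨hr'T.1, fun y hy => ?_⟩
    exact hr'min y ⟨hy, truncN_of_lt hy hr'T, hr'T⟩
  bot_maximal := by
    intro x hx hlab y hy
    have hyT := hy.2.2
    have hlev : levOf α.lt x < levOf α.lt y :=
      levOf_lt_of_lt α.trans' α.lt_irrefl α.finPred hy.1
    have hcond : x ∈ α.N ∧ levOf α.lt x < n := ⟨hx.1, by have := hyT.2; omega⟩
    beta_reduce at hlab
    rw [if_pos hcond] at hlab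
    exact α.bot_maximal x hx.1 hlab y hy.1
  form_sat := by
    intro x hx
    beta_reduce
    rw [if_pos hx]
    exact α.form_sat x hx.1
  form_free := by
    intro x hx y hy
    beta_reduce at hy
    rw [if_pos hx] at hy
    have := α.form_free x hx.1 y hy
    exact ⟨this, truncN_of_lt this hx, hx⟩
  form_impl := by
    intro x y hxy v
    beta_reduce
    rw [if_pos hxy.2.1, if_pos hxy.2.2]
    exact α.form_impl hxy.1 v
  lab_junk := by
    intro x hx
    beta_reduce
    rw [if_neg]
    intro hcond
    exact hx ⟨hcond.1, by omega⟩
  form_junk := by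
    intro x hx
    beta_reduce
    rw [if_neg hx]

lemma mkTrunc_isTrunc (α : LPOF L) (n : ℕ) : IsTrunc α n (mkTrunc α n) := by
  refine ⟨?_, fun x y => Iff.rfl, ?_, ?_⟩
  · ext x
    simp only [mkTrunc, truncN, Set.mem_setOf_eq, Set.mem_sep_iff]
  · intro x hx
    constructor
    · intro hlt
      exact if_pos ⟨hx.1, hlt⟩
    · intro heq
      exact if_neg (by rintro ⟨_, h⟩; omega)
  · intro x hx
    exact if_pos hx

lemma mkTrunc_lab_pos (α : LPOF L) (n x : ℕ) (h : x ∈ α.N ∧ levOf α.lt x < n) :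
    (mkTrunc α n).lab x = α.lab x := if_pos h

lemma mkTrunc_lab_neg (α : LPOF L) (n x : ℕ) (h : ¬ (x ∈ α.N ∧ levOf α.lt x < n)) :
    (mkTrunc α n).lab x = ⊥ := if_neg h

lemma mkTrunc_form_pos (α : LPOF L) (n x : ℕ) (h : x ∈ truncN α n) :
    (mkTrunc α n).form x = α.form x := if_pos h

lemma mkTrunc_form_neg (α : LPOF L) (n x : ℕ) (h : x ∉ truncN α n) :
    (mkTrunc α n).form x = Form.top := if_neg h

lemma IsTrunc.memIff {α A : LPOF L} {n : ℕ} (hA : IsTrunc α n A) {x : ℕ} :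
    x ∈ A.N ↔ x ∈ α.N ∧ levOf α.lt x ≤ n := by
  rw [hA.1]; exact Set.mem_sep_iff

lemma IsTrunc.lev {α A : LPOF L} {n : ℕ} (hA : IsTrunc α n A) {x : ℕ}
    (hx : x ∈ A.N) : levOf A.lt x = levOf α.lt x := by
  refine levOf_eq_of_sub (S := A.N) hx
    (fun {a b} hab => ((hA.2.1 a b).1 hab).1) ?_
  intro a b hab hb
  have hbmem := hA.memIff.mp hb
  have ha : a ∈ A.N := by
    refine hA.memIff.mpr ⟨(α.lt_mem hab).1, ?_⟩
    have := levOf_lt_of_lt α.trans' α.lt_irrefl α.finPred hab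
    have := hbmem.2
    omega
  exact ⟨ha, (hA.2.1 a b).2 ⟨hab, ha, hb⟩⟩

lemma IsTrunc.succsIff {α A : LPOF L} {n : ℕ} (hA : IsTrunc α n A) {x y : ℕ}
    (hx : x ∈ A.N) (hy : y ∈ A.N) : y ∈ A.succs x ↔ y ∈ α.succs x := by
  constructor
  · rintro ⟨h1, h2⟩
    refine ⟨((hA.2.1 x y).1 h1).1, ?_⟩
    rintro ⟨z, hxz, hzy⟩
    have hz : z ∈ A.N := by
      refine hA.memIff.mpr ⟨(α.lt_mem hxz).2, ?_⟩
      have := levOf_lt_of_lt α.trans' α.lt_irrefl α.finPred hzy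
      have := (hA.memIff.mp hy).2
      omega
    exact h2 ⟨z, (hA.2.1 x z).2 ⟨hxz, hx, hz⟩, (hA.2.1 z y).2 ⟨hzy, hz, hy⟩⟩
  · rintro ⟨h1, h2⟩
    refine ⟨(hA.2.1 x y).2 ⟨h1, hx, hy⟩, ?_⟩
    rintro ⟨z, hxz, hzy⟩
    exact h2 ⟨z, ((hA.2.1 x z).1 hxz).1, ((hA.2.1 z y).1 hzy).1⟩

/-- Monotonicity of truncation w.r.t. `⊑`. -/
lemma trunc_mono {α β A B : LPOF L} {n : ℕ} (h : α.le β)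
    (hA : IsTrunc α n A) (hB : IsTrunc β n B) : A.le B := by
  have hsub : A.N ⊆ B.N := by
    intro x hx
    obtain ⟨hx1, hx2⟩ := hA.memIff.mp hx
    exact hB.memIff.mpr ⟨h.subN hx1, by rw [← h.levEq hx1]; exact hx2⟩
  have hltAB : ∀ {x y}, A.lt x y → B.lt x y := by
    intro x y hxy
    obtain ⟨ha, hx, hy⟩ := (hA.2.1 x y).1 hxy
    exact (hB.2.1 x y).2 ⟨((h.ltIff x y).1 ha).1, hsub hx, hsub hy⟩
  refine ⟨hsub, ?_, ?_, ?_, ?_, ?_⟩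
  · intro x hx y hy
    obtain ⟨hb, hyB, hxB⟩ := (hB.2.1 y x).1 hy
    obtain ⟨hx1, hx2⟩ := hA.memIff.mp hx
    have hyα : y ∈ α.N := h.down x hx1 y hb
    refine hA.memIff.mpr ⟨hyα, ?_⟩
    rw [h.levEq hyα]
    have := (hB.memIff.mp hyB).2
    omega
  · intro x y
    refine ⟨fun hxy => ⟨hltAB hxy, ((hA.2.1 x y).1 hxy).2⟩, ?_⟩
    rintro ⟨hb, hx, hy⟩
    obtain ⟨hbeta, _, _⟩ := (hB.2.1 x y).1 hb
    obtain ⟨hx1, _⟩ := hA.memIff.mp hx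
    obtain ⟨hy1, _⟩ := hA.memIff.mp hy
    exact (hA.2.1 x y).2 ⟨(h.ltIff x y).2 ⟨hbeta, hx1, hy1⟩, hx, hy⟩
  · intro x hx
    obtain ⟨hx1, hx2⟩ := hA.memIff.mp hx
    rcases lt_or_eq_of_le hx2 with hlt | heq
    · rw [((hA.2.2.1 x hx).1 hlt), ((hB.2.2.1 x (hsub hx)).1 (by rwa [← h.levEq hx1]))]
      exact h.labLe x hx1
    · rw [(hA.2.2.1 x hx).2 heq]
      exact bot_le
  · intro x hx
    obtain ⟨hx1, _⟩ := hA.memIff.mp hx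
    rw [hA.2.2.2 x hx, hB.2.2.2 x (hsub hx), h.formEq x hx1]
  · intro x hx
    obtain ⟨hx1, hx2⟩ := hA.memIff.mp hx
    rcases lt_or_eq_of_le hx2 with hlev | hlev
    · -- interior node
      have hsucc := h.succsEq x hx1
      ext y
      simp only [Set.mem_diff]
      constructor
      · intro hy
        have hyA : y ∈ A.N := ((hA.2.1 x y).1 hy.1).2.2
        have hyα : y ∈ α.succs x := (hA.succsIff hx hyA).mp hy
        have hyβ : y ∈ β.succs x ∧ y ∉ β.succPlus α.Bot := by
          rw [hsucc] at hyα; exact hyα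
        refine ⟨(hB.succsIff (hsub hx) (hsub hyA)).mpr hyβ.1, ?_⟩
        rintro ⟨z, ⟨hzA, hzlab⟩, hzy⟩
        obtain ⟨hzb, hzB, hyB⟩ := (hB.2.1 z y).1 hzy
        obtain ⟨hz1, hz2⟩ := hA.memIff.mp hzA
        rcases lt_or_eq_of_le hz2 with hzlt | hzeq
        · rw [(hA.2.2.1 z hzA).1 hzlt] at hzlab
          exact hyβ.2 ⟨z, ⟨hz1, hzlab⟩, hzb⟩
        · have h1 : levOf β.lt z < levOf β.lt y :=
            levOf_lt_of_lt β.trans' β.lt_irrefl β.finPred hzb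
          have h2 := (hB.memIff.mp hyB).2
          rw [← h.levEq hz1] at h1
          omega
      · rintro ⟨hy, hysp⟩
        have hyB : y ∈ B.N := (B.lt_mem hy.1).2
        have hyβ : y ∈ β.succs x := (hB.succsIff (hsub hx) hyB).mp hy
        have hynsp : y ∉ β.succPlus α.Bot := by
          rintro ⟨z, ⟨hzN, hzlab⟩, hzy⟩
          have hlevz : levOf β.lt z < levOf β.lt y :=
            levOf_lt_of_lt β.trans' β.lt_irrefl β.finPred hzy
          have hlevy := (hB.memIff.mp hyB).2
          have hzB : z ∈ B.N := hB.memIff.mpr ⟨h.subN hzN, by omega⟩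
          have hzA : z ∈ A.N := hA.memIff.mpr ⟨hzN, by rw [h.levEq hzN]; omega⟩
          have hzAbot : A.lab z = ⊥ := by
            rw [(hA.2.2.1 z hzA).1 (by rw [h.levEq hzN]; omega), hzlab]
          exact hysp ⟨z, ⟨hzA, hzAbot⟩, (hB.2.1 z y).2 ⟨hzy, hzB, hyB⟩⟩
        have hyα : y ∈ α.succs x := by rw [hsucc]; exact ⟨hyβ, hynsp⟩
        have hyA : y ∈ A.N := by
          refine hA.memIff.mpr ⟨(α.lt_mem hyα.1).2, ?_⟩
          rw [h.levEq (α.lt_mem hyα.1).2]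
          exact (hB.memIff.mp hyB).2
        exact (hA.succsIff hx hyA).mpr hyα
    · -- boundary node: both sides empty
      have hxbot : x ∈ A.Bot := ⟨hx, (hA.2.2.1 x hx).2 hlev⟩
      ext y
      simp only [Set.mem_diff]
      constructor
      · intro hy
        exfalso
        have h1 := ((hA.2.1 x y).1 hy.1)
        have h2 : levOf α.lt x < levOf α.lt y :=
          levOf_lt_of_lt α.trans' α.lt_irrefl α.finPred h1.1
        have := (hA.memIff.mp h1.2.2).2
        omega
      · rintro ⟨hy, hysp⟩
        exact absurd ⟨x, hxbot, hy.1⟩ hysp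

end Trunc

section Sup

variable {L : Type} [LabelDCPO L]

def supN (D : Set (LPOF L)) : Set ℕ := {x | ∃ β ∈ D, x ∈ β.N}

def supLt (D : Set (LPOF L)) (x y : ℕ) : Prop := ∃ β ∈ D, β.lt x y

variable {D : Set (LPOF L)}

/-- Upper bounds for finite subsets of a directed set. -/
lemma dir_finset_le (hne : D.Nonempty) (hdir : DirectedOn LPOF.le D) (s : Finset (LPOF L)) (hs : ↑s ⊆ D) :
    ∃ δ ∈ D, ∀ β ∈ s, β.le δ := by
  classical
  induction s using Finset.induction with
  | empty => exact ⟨hne.choose, hne.choose_spec, fun β hβ => absurd hβ (by simp)⟩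
  | @insert a s ha ih =>
    have hs' : ↑s ⊆ D := fun β hβ => hs (by simp [hβ])
    obtain ⟨δ, hδ, hub⟩ := ih hs'
    obtain ⟨δ', hδ', h1, h2⟩ := hdir a (hs (by simp)) δ hδ
    refine ⟨δ', hδ', fun β hβ => ?_⟩
    rcases Finset.mem_insert.mp hβ with rfl | hβ
    · exact h1
    · exact LPOF.le_trans' (hub β hβ) h2

lemma sup_lt_of_mem (hdir : DirectedOn LPOF.le D) {β : LPOF L} (hβ : β ∈ D) {x y : ℕ}
    (hx : x ∈ β.N) (hy : y ∈ β.N) (h : supLt D x y) : β.lt x y := by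
  obtain ⟨γ, hγ, hlt⟩ := h
  obtain ⟨δ, hδ, h1, h2⟩ := hdir β hβ γ hγ
  have hδlt : δ.lt x y := ((h2.ltIff x y).1 hlt).1
  exact (h1.ltIff x y).2 ⟨hδlt, hx, hy⟩

lemma sup_pred_closed (hdir : DirectedOn LPOF.le D) {β : LPOF L} (hβ : β ∈ D) {x y : ℕ}
    (hx : x ∈ β.N) (h : supLt D y x) : y ∈ β.N ∧ β.lt y x := by
  obtain ⟨γ, hγ, hlt⟩ := h
  obtain ⟨δ, hδ, h1, h2⟩ := hdir β hβ γ hγ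
  have hδlt : δ.lt y x := ((h2.ltIff y x).1 hlt).1
  have hyβ : y ∈ β.N := h1.down x hx y hδlt
  exact ⟨hyβ, (h1.ltIff y x).2 ⟨hδlt, hyβ, hx⟩⟩

lemma sup_lev (hdir : DirectedOn LPOF.le D) {β : LPOF L} (hβ : β ∈ D) {x : ℕ} (hx : x ∈ β.N) :
    levOf (supLt D) x = levOf β.lt x := by
  refine (levOf_eq_of_sub (S := β.N) hx (fun {a b} hab => ⟨β, hβ, hab⟩) ?_).symm
  intro a b hab hb
  exact sup_pred_closed hdir hβ hb hab

lemma sup_trans' (hdir : DirectedOn LPOF.le D) : Transitive (supLt D) := by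
  rintro x y z ⟨β, hβ, h1⟩ ⟨γ, hγ, h2⟩
  obtain ⟨δ, hδ, hb, hg⟩ := hdir β hβ γ hγ
  exact ⟨δ, hδ, δ.lt_trans ((hb.ltIff x y).1 h1).1 ((hg.ltIff y z).1 h2).1⟩

lemma sup_irrefl : ∀ x, ¬ supLt D x x := by
  rintro x ⟨β, _, h⟩
  exact β.lt_irrefl x h

lemma sup_finPred (hdir : DirectedOn LPOF.le D) : ∀ x, {y | supLt D y x}.Finite := by
  intro x
  by_cases hx : x ∈ supN D
  · obtain ⟨β, hβ, hxβ⟩ := hx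
    refine (β.finPred x).subset ?_
    intro y hy
    exact (sup_pred_closed hdir hβ hxβ hy).2
  · refine Set.finite_empty.subset ?_
    rintro y ⟨β, hβ, h⟩
    exact absurd ⟨β, hβ, (β.lt_mem h).2⟩ hx

lemma sup_form_agree (hdir : DirectedOn LPOF.le D) {β γ : LPOF L} (hβ : β ∈ D) (hγ : γ ∈ D) {x : ℕ}
    (hxβ : x ∈ β.N) (hxγ : x ∈ γ.N) : β.form x = γ.form x := by
  obtain ⟨δ, hδ, h1, h2⟩ := hdir β hβ γ hγ
  rw [h1.formEq x hxβ, h2.formEq x hxγ]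

/-- The common root of all members of a directed set. -/
lemma sup_root (hne : D.Nonempty) (hdir : DirectedOn LPOF.le D) : ∃ r, ∀ β ∈ D, r ∈ β.N ∧ ∀ y, ¬ β.lt y r := by
  obtain ⟨β₀, hβ₀⟩ := hne
  obtain ⟨r, hr, _⟩ := β₀.singleRoot
  refine ⟨r, fun β hβ => ?_⟩
  obtain ⟨δ, hδ, h1, h2⟩ := hdir β hβ β₀ hβ₀
  obtain ⟨rβ, hrβ, _⟩ := β.singleRoot
  obtain ⟨rδ, _, hrδu⟩ := δ.singleRoot
  have e1 : r = rδ := hrδu r (h2.rootEq hr)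
  have e2 : rβ = rδ := hrδu rβ (h1.rootEq hrβ)
  rw [e1, ← e2]
  exact hrβ

lemma lab_directed (hdir : DirectedOn LPOF.le D) (x : ℕ) : DirectedOn (· ≤ ·) ((fun β : LPOF L => β.lab x) '' D) := by
  rintro _ ⟨β, hβ, rfl⟩ _ ⟨γ, hγ, rfl⟩
  obtain ⟨δ, hδ, h1, h2⟩ := hdir β hβ γ hγ
  have hb : β.lab x ≤ δ.lab x := by
    by_cases hx : x ∈ β.N
    · exact h1.labLe x hx
    · rw [β.lab_junk x hx]; exact bot_le
  have hg : γ.lab x ≤ δ.lab x := by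
    by_cases hx : x ∈ γ.N
    · exact h2.labLe x hx
    · rw [γ.lab_junk x hx]; exact bot_le
  exact ⟨δ.lab x, ⟨δ, hδ, rfl⟩, hb, hg⟩

noncomputable def supLab (hne : D.Nonempty) (hdir : DirectedOn LPOF.le D) (x : ℕ) : L :=
  Classical.choose (LabelDCPO.directedSupExists ((fun β : LPOF L => β.lab x) '' D)
    (hne.image _) (lab_directed hdir x))

lemma supLab_isLUB (hne : D.Nonempty) (hdir : DirectedOn LPOF.le D) (x : ℕ) :
    IsLUB ((fun β : LPOF L => β.lab x) '' D) (supLab hne hdir x) :=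
  Classical.choose_spec _

lemma supLab_bot_iff (hne : D.Nonempty) (hdir : DirectedOn LPOF.le D) (x : ℕ) :
    supLab hne hdir x = ⊥ ↔ ∀ β ∈ D, β.lab x = ⊥ := by
  constructor
  · intro h β hβ
    have := (supLab_isLUB hne hdir x).1 ⟨β, hβ, rfl⟩
    rw [h] at this
    exact le_bot_iff.mp this
  · intro h
    refine le_bot_iff.mp ((supLab_isLUB hne hdir x).2 ?_)
    rintro _ ⟨β, hβ, rfl⟩
    beta_reduce
    rw [h β hβ]

open Classical in
noncomputable def supForm (D : Set (LPOF L)) (x : ℕ) : Form :=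
  if h : ∃ β, β ∈ D ∧ x ∈ β.N then h.choose.form x else Form.top

lemma supForm_eq (hdir : DirectedOn LPOF.le D) {β : LPOF L} (hβ : β ∈ D) {x : ℕ} (hx : x ∈ β.N) :
    supForm D x = β.form x := by
  rw [supForm, dif_pos ⟨β, hβ, hx⟩]
  generalize_proofs h
  exact sup_form_agree hdir h.choose_spec.1 hβ h.choose_spec.2 hx

/-- Every node of level `≤ m` in the union already appears in a single member. -/
lemma sup_level_covered (hne : D.Nonempty) (hdir : DirectedOn LPOF.le D) (m : ℕ) :
    ∃ γ ∈ D, ∀ x ∈ supN D, levOf (supLt D) x ≤ m → x ∈ γ.N := by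
  classical
  induction m with
  | zero =>
    obtain ⟨r, hr⟩ := sup_root hne hdir
    refine ⟨hne.choose, hne.choose_spec, ?_⟩
    rintro x ⟨β, hβ, hxβ⟩ hlev
    have hmin : ∀ y, ¬ supLt D y x :=
      not_lt_of_levOf_zero (sup_trans' hdir) sup_irrefl (sup_finPred hdir)
        (Nat.le_zero.mp hlev)
    obtain ⟨rβ, hrβ, hrβu⟩ := β.singleRoot
    have e1 : x = rβ := hrβu x ⟨hxβ, fun y hy => hmin y ⟨β, hβ, hy⟩⟩
    have e2 : r = rβ := hrβu r ⟨(hr β hβ).1, (hr β hβ).2⟩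
    rw [e1, ← e2]
    exact (hr hne.choose hne.choose_spec).1
  | succ m ih =>
    obtain ⟨γ, hγ, hcov⟩ := ih
    have hF : {x ∈ γ.N | levOf γ.lt x ≤ m}.Finite := by
      have hsub : {x ∈ γ.N | levOf γ.lt x ≤ m} ⊆
          ⋃ i ∈ Finset.range (m + 1), {x ∈ γ.N | levOf γ.lt x = i} := by
        rintro x ⟨hx1, hx2⟩
        simp only [Set.mem_iUnion, Finset.mem_range]
        exact ⟨levOf γ.lt x, by omega, hx1, rfl⟩
      exact (Set.Finite.biUnion (Finset.range (m + 1)).finite_toSet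
        (fun i _ => γ.finLevel i)).subset hsub
    set wit : ℕ → LPOF L := fun z =>
      if h : ∃ δ, δ ∈ D ∧ δ.lab z ≠ ⊥ then h.choose else γ with hwit
    have hwitD : ∀ z, wit z ∈ D := by
      intro z
      rw [hwit]
      by_cases h : ∃ δ, δ ∈ D ∧ δ.lab z ≠ ⊥
      · simp only [dif_pos h]; exact h.choose_spec.1
      · simp only [dif_neg h]; exact hγ
    obtain ⟨γ', hγ', hub⟩ := dir_finset_le hne hdir
      (insert γ (hF.toFinset.image wit))
      (by
        intro β hβ
        simp only [Finset.coe_insert, Set.mem_insert_iff, Finset.coe_image,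
          Set.mem_image] at hβ
        rcases hβ with rfl | ⟨z, _, rfl⟩
        · exact hγ
        · exact hwitD z)
    have hγγ' : γ.le γ' := hub γ (by simp)
    have hlabkey : ∀ z ∈ γ.N, levOf γ.lt z ≤ m → γ'.lab z = ⊥ →
        ∀ δ ∈ D, δ.lab z = ⊥ := by
      intro z hz1 hz2 hbot δ hδ
      by_contra hne'
      have hex : ∃ δ, δ ∈ D ∧ δ.lab z ≠ ⊥ := ⟨δ, hδ, hne'⟩
      have hwz : wit z = hex.choose := by rw [hwit]; simp only [dif_pos hex]
      have hwle : (wit z).le γ' := hub _ (by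
        simp only [Finset.mem_insert, Finset.mem_image, Set.Finite.mem_toFinset]
        exact Or.inr ⟨z, ⟨hz1, hz2⟩, rfl⟩)
      have hlab : (wit z).lab z ≠ ⊥ := by rw [hwz]; exact hex.choose_spec.2
      have hzw : z ∈ (wit z).N := by
        by_contra hc
        exact hlab ((wit z).lab_junk z hc)
      have := hwle.labLe z hzw
      rw [hbot] at this
      exact hlab (le_bot_iff.mp this)
    refine ⟨γ', hγ', ?_⟩
    intro y hy hlev
    rcases Nat.lt_succ_iff_lt_or_eq.mp (Nat.lt_succ_of_le hlev) with hlt | heq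
    · exact hγγ'.subN (hcov y hy (by omega))
    · obtain ⟨δ, hδ, hyδ⟩ := hy
      obtain ⟨δ'', hδ'', hd1, hd2⟩ := hdir δ hδ γ' hγ'
      have hyδ'' : y ∈ δ''.N := hd1.subN hyδ
      have hlevδ'' : levOf δ''.lt y = m + 1 := by
        rw [← sup_lev hdir hδ'' hyδ'', heq]
      obtain ⟨w, hwy, hwim, hwlev⟩ :=
        levOf_succ_exists δ''.trans' δ''.lt_irrefl δ''.finPred hlevδ''
      have hwsup : w ∈ supN D := ⟨δ'', hδ'', (δ''.lt_mem hwy).1⟩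
      have hwlevsup : levOf (supLt D) w = m := by
        rw [sup_lev hdir hδ'' (δ''.lt_mem hwy).1]; exact hwlev
      have hwγ : w ∈ γ.N := hcov w hwsup (by omega)
      have hwγlev : levOf γ.lt w ≤ m := by
        rw [← sup_lev hdir hγ hwγ, hwlevsup]
      have hwγ' : w ∈ γ'.N := hγγ'.subN hwγ
      have hysucc : y ∈ δ''.succs w := ⟨hwy, hwim⟩
      have hsucceq := hd2.succsEq w hwγ'
      by_cases hsp : y ∈ δ''.succPlus γ'.Bot
      · exfalso
        obtain ⟨z, ⟨hzγ', hzlab⟩, hzy⟩ := hsp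
        have hzlev : levOf δ''.lt z < m + 1 := by
          rw [← hlevδ'']
          exact levOf_lt_of_lt δ''.trans' δ''.lt_irrefl δ''.finPred hzy
        have hzδ'' : z ∈ δ''.N := (δ''.lt_mem hzy).1
        have hzsup : levOf (supLt D) z ≤ m := by
          rw [sup_lev hdir hδ'' hzδ'']; omega
        have hzγ : z ∈ γ.N := hcov z ⟨δ'', hδ'', hzδ''⟩ hzsup
        have hzγlev : levOf γ.lt z ≤ m := by
          rw [← sup_lev hdir hγ hzγ]; exact hzsup
        have := hlabkey z hzγ hzγlev hzlab δ'' hδ''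
        exact δ''.bot_maximal z hzδ'' this y hzy
      · have : y ∈ γ'.succs w := by rw [hsucceq]; exact ⟨hysucc, hsp⟩
        exact (γ'.lt_mem this.1).2

noncomputable def mkSup (hne : D.Nonempty) (hdir : DirectedOn LPOF.le D) : LPOF L where
  N := supN D
  lt := supLt D
  lab := supLab hne hdir
  form := supForm D
  lt_mem := by
    rintro x y ⟨β, hβ, h⟩
    exact ⟨⟨β, hβ, (β.lt_mem h).1⟩, ⟨β, hβ, (β.lt_mem h).2⟩⟩
  lt_trans := fun h h' => sup_trans' hdir h h'
  lt_irrefl := sup_irrefl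
  finPred := sup_finPred hdir
  finLevel := by
    intro m
    obtain ⟨γ, hγ, hcov⟩ := sup_level_covered hne hdir m
    refine (γ.finLevel m).subset ?_
    rintro x ⟨hx1, hx2⟩
    have hxγ : x ∈ γ.N := hcov x hx1 (le_of_eq hx2)
    refine ⟨hxγ, ?_⟩
    rw [← sup_lev hdir hγ hxγ]
    exact hx2
  singleRoot := by
    obtain ⟨r, hr⟩ := sup_root hne hdir
    obtain ⟨β₀, hβ₀⟩ := hne
    refine ⟨r, ⟨⟨β₀, hβ₀, (hr β₀ hβ₀).1⟩, ?_⟩, ?_⟩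
    · rintro y ⟨β, hβ, hy⟩
      exact (hr β hβ).2 y hy
    · rintro r' ⟨⟨β, hβ, hr'β⟩, hr'min⟩
      obtain ⟨rβ, hrβ, hrβu⟩ := β.singleRoot
      have e1 : r' = rβ := hrβu r' ⟨hr'β, fun y hy => hr'min y ⟨β, hβ, hy⟩⟩
      have e2 : r = rβ := hrβu r ⟨(hr β hβ).1, (hr β hβ).2⟩
      rw [e1, ← e2]
  bot_maximal := by
    rintro x hx hlab y ⟨β, hβ, hy⟩
    have hβlab : β.lab x = ⊥ := (supLab_bot_iff hne hdir x).1 hlab β hβ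
    exact β.bot_maximal x (β.lt_mem hy).1 hβlab y hy
  form_sat := by
    rintro x ⟨β, hβ, hx⟩
    rw [supForm_eq hdir hβ hx]
    exact β.form_sat x hx
  form_free := by
    rintro x ⟨β, hβ, hx⟩ y hy
    rw [supForm_eq hdir hβ hx] at hy
    exact ⟨β, hβ, β.form_free x hx y hy⟩
  form_impl := by
    rintro x y ⟨β, hβ, hxy⟩ v
    rw [supForm_eq hdir hβ (β.lt_mem hxy).1, supForm_eq hdir hβ (β.lt_mem hxy).2]
    exact β.form_impl hxy v
  lab_junk := by
    intro x hx
    refine (supLab_bot_iff hne hdir x).2 ?_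
    intro β hβ
    refine β.lab_junk x (fun hc => hx ⟨β, hβ, hc⟩)
  form_junk := by
    intro x hx
    rw [supForm, dif_neg]
    rintro ⟨β, hβ, hc⟩
    exact hx ⟨β, hβ, hc⟩

variable (hne : D.Nonempty) (hdir : DirectedOn LPOF.le D)

/-- `mkSup` is an upper bound. -/
lemma mkSup_ub {β : LPOF L} (hβ : β ∈ D) : β.le (mkSup hne hdir) := by
  refine ⟨fun x hx => ⟨β, hβ, hx⟩, ?_, ?_, ?_, ?_, ?_⟩
  · intro x hx y hy
    exact (sup_pred_closed hdir hβ hx hy).1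
  · intro x y
    constructor
    · intro h
      exact ⟨⟨β, hβ, h⟩, (β.lt_mem h).1, (β.lt_mem h).2⟩
    · rintro ⟨h, hx, hy⟩
      exact sup_lt_of_mem hdir hβ hx hy h
  · intro x hx
    exact (supLab_isLUB hne hdir x).1 ⟨β, hβ, rfl⟩
  · intro x hx
    exact (supForm_eq hdir hβ hx).symm
  · intro x hx
    ext y
    simp only [Set.mem_diff]
    constructor
    · intro hy
      have hylt : supLt D x y := ⟨β, hβ, hy.1⟩
      refine ⟨⟨hylt, ?_⟩, ?_⟩
      · rintro ⟨z, ⟨γ1, hγ1, h1⟩, ⟨γ2, hγ2, h2⟩⟩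
        classical
        obtain ⟨δ, hδ, hub⟩ := dir_finset_le hne hdir {β, γ1, γ2} (by
          intro e he
          simp only [Finset.coe_insert, Set.mem_insert_iff, Finset.coe_singleton,
            Set.mem_singleton_iff] at he
          rcases he with rfl | rfl | rfl <;> assumption)
        have hβδ : β.le δ := hub β (by simp)
        have h1' : δ.lt x z := (((hub γ1 (by simp)).ltIff x z).1 h1).1
        have h2' : δ.lt z y := (((hub γ2 (by simp)).ltIff z y).1 h2).1
        have hyδ : y ∈ δ.succs x := by
          have := hβδ.succsEq x hx
          have := (this ▸ hy : y ∈ δ.succs x \ δ.succPlus β.Bot)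
          exact this.1
        exact hyδ.2 ⟨z, h1', h2'⟩
      · rintro ⟨z, hz, ⟨γ, hγ, hzy⟩⟩
        obtain ⟨δ, hδ, hb, hg⟩ := hdir β hβ γ hγ
        have hzy' : δ.lt z y := ((hg.ltIff z y).1 hzy).1
        have := hb.succsEq x hx
        have hyδ : y ∈ δ.succs x ∧ y ∉ δ.succPlus β.Bot := by
          rw [this] at hy; exact ⟨hy.1, hy.2⟩
        exact hyδ.2 ⟨z, hz, hzy'⟩
    · rintro ⟨⟨⟨γ, hγ, hxy⟩, him⟩, hsp⟩
      obtain ⟨δ, hδ, hb, hg⟩ := hdir β hβ γ hγ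
      have hxy' : δ.lt x y := ((hg.ltIff x y).1 hxy).1
      have hyδ : y ∈ δ.succs x := by
        refine ⟨hxy', ?_⟩
        rintro ⟨z, h1, h2⟩
        exact him ⟨z, ⟨δ, hδ, h1⟩, ⟨δ, hδ, h2⟩⟩
      have hnsp : y ∉ δ.succPlus β.Bot := by
        rintro ⟨z, hz, hzy⟩
        exact hsp ⟨z, hz, ⟨δ, hδ, hzy⟩⟩
      rw [hb.succsEq x hx]
      exact ⟨hyδ, hnsp⟩

/-- `mkSup` is below every upper bound. -/
lemma mkSup_least {c : LPOF L} (hc : ∀ β ∈ D, β.le c) : (mkSup hne hdir).le c := by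
  have hsub : supN D ⊆ c.N := by
    rintro x ⟨β, hβ, hx⟩
    exact (hc β hβ).subN hx
  refine ⟨hsub, ?_, ?_, ?_, ?_, ?_⟩
  · rintro x ⟨β, hβ, hx⟩ y hy
    exact ⟨β, hβ, (hc β hβ).down x hx y hy⟩
  · intro x y
    constructor
    · rintro ⟨β, hβ, h⟩
      exact ⟨(((hc β hβ).ltIff x y).1 h).1, ⟨β, hβ, (β.lt_mem h).1⟩, ⟨β, hβ, (β.lt_mem h).2⟩⟩
    · rintro ⟨h, ⟨β, hβ, hx⟩, ⟨γ, hγ, hy⟩⟩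
      obtain ⟨δ, hδ, hb, hg⟩ := hdir β hβ γ hγ
      exact ⟨δ, hδ, ((hc δ hδ).ltIff x y).2 ⟨h, hb.subN hx, hg.subN hy⟩⟩
  · intro x hx
    refine (supLab_isLUB hne hdir x).2 ?_
    rintro _ ⟨β, hβ, rfl⟩
    beta_reduce
    by_cases hxβ : x ∈ β.N
    · exact (hc β hβ).labLe x hxβ
    · rw [β.lab_junk x hxβ]; exact bot_le
  · rintro x ⟨β, hβ, hx⟩
    show supForm D x = c.form x
    rw [supForm_eq hdir hβ hx, (hc β hβ).formEq x hx]
  · rintro x hxsup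
    obtain ⟨β, hβ, hx⟩ := hxsup
    classical
    ext y
    simp only [Set.mem_diff]
    constructor
    · rintro ⟨⟨γ, hγ, hxy⟩, him⟩
      obtain ⟨δ, hδ, hb, hg⟩ := hdir β hβ γ hγ
      have hxy' : δ.lt x y := ((hg.ltIff x y).1 hxy).1
      have hyδ : y ∈ δ.succs x := by
        refine ⟨hxy', ?_⟩
        rintro ⟨z, h1, h2⟩
        exact him ⟨z, ⟨δ, hδ, h1⟩, ⟨δ, hδ, h2⟩⟩
      have hsucceq := (hc δ hδ).succsEq x (hb.subN hx)
      have hyc : y ∈ c.succs x := by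
        rw [hsucceq] at hyδ; exact hyδ.1
      refine ⟨hyc, ?_⟩
      rintro ⟨z, ⟨hzsup, hzlab⟩, hzy⟩
      obtain ⟨ε, hε, hzε⟩ := hzsup
      obtain ⟨δ', hδ', hd1, hd2⟩ := hdir δ hδ ε hε
      have hyδ' : y ∈ δ'.N := hd1.subN (δ.lt_mem hxy').2
      have hzδ' : z ∈ δ'.N := hd2.subN hzε
      have hzy' : δ'.lt z y := ((hc δ' hδ').ltIff z y).2 ⟨hzy, hzδ', hyδ'⟩
      have hzbot : δ'.lab z = ⊥ := (supLab_bot_iff hne hdir z).1 hzlab δ' hδ'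
      exact δ'.bot_maximal z hzδ' hzbot y hzy'
    · rintro ⟨hyc, hnsp⟩
      -- choose a member δ in which all ⊥-labels of `c`-predecessors of y are settled
      set P := (c.finPred y).toFinset with hP
      set wit : ℕ → LPOF L :=
        fun z => if h : ∃ ε, ε ∈ D ∧ ε.lab z ≠ ⊥ then h.choose else β with hwit
      have hwitD : ∀ z, wit z ∈ D := by
        intro z
        rw [hwit]
        by_cases h : ∃ ε, ε ∈ D ∧ ε.lab z ≠ ⊥
        · simp only [dif_pos h]; exact h.choose_spec.1
        · simp only [dif_neg h]; exact hβ
      obtain ⟨δ, hδ, hub⟩ := dir_finset_le hne hdir (insert β (P.image wit)) (by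
        intro e he
        simp only [Finset.coe_insert, Set.mem_insert_iff, Finset.coe_image,
          Set.mem_image] at he
        rcases he with rfl | ⟨z, _, rfl⟩
        · exact hβ
        · exact hwitD z)
      have hβδ : β.le δ := hub β (by simp)
      have hxδ : x ∈ δ.N := hβδ.subN hx
      have hnspδ : y ∉ c.succPlus δ.Bot := by
        rintro ⟨z, ⟨hzδ, hzlab⟩, hzy⟩
        by_cases hzbot : supLab hne hdir z = ⊥
        · exact hnsp ⟨z, ⟨⟨δ, hδ, hzδ⟩, hzbot⟩, hzy⟩
        · have hex : ∃ ε, ε ∈ D ∧ ε.lab z ≠ ⊥ := by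
            by_contra hcon
            push_neg at hcon
            exact hzbot ((supLab_bot_iff hne hdir z).2 hcon)
          have hwz : wit z = hex.choose := by rw [hwit]; simp only [dif_pos hex]
          have hlab : (wit z).lab z ≠ ⊥ := by rw [hwz]; exact hex.choose_spec.2
          have hzw : z ∈ (wit z).N := by
            by_contra hcc
            exact hlab ((wit z).lab_junk z hcc)
          have hwle : (wit z).le δ := hub _ (by
            simp only [Finset.mem_insert, Finset.mem_image, Set.Finite.mem_toFinset]
            exact Or.inr ⟨z, by simpa [hP] using hzy, rfl⟩)
          have := hwle.labLe z hzw
          rw [hzlab] at this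
          exact hlab (le_bot_iff.mp this)
      have hyδ : y ∈ δ.succs x := by
        rw [(hc δ hδ).succsEq x hxδ]
        exact ⟨hyc, hnspδ⟩
      refine ⟨⟨δ, hδ, hyδ.1⟩, ?_⟩
      rintro ⟨z, ⟨γ1, hγ1, h1⟩, ⟨γ2, hγ2, h2⟩⟩
      obtain ⟨δ'', hδ'', hubb⟩ := dir_finset_le hne hdir {δ, γ1, γ2} (by
        intro e he
        simp only [Finset.coe_insert, Set.mem_insert_iff, Finset.coe_singleton,
          Set.mem_singleton_iff] at he
        rcases he with rfl | rfl | rfl <;> assumption)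
      have h1' : δ''.lt x z := (((hubb γ1 (by simp)).ltIff x z).1 h1).1
      have h2' : δ''.lt z y := (((hubb γ2 (by simp)).ltIff z y).1 h2).1
      have hyδ'' : y ∈ δ''.succs x := by
        have hs := (hubb δ (by simp)).succsEq x hxδ
        have : y ∈ δ''.succs x \ δ''.succPlus δ.Bot := hs ▸ hyδ
        exact this.1
      exact hyδ''.2 ⟨z, h1', h2'⟩

end Sup

section Final

variable {L : Type} [LabelDCPO L]

lemma LPOF.ext' {α β : LPOF L} (hN : α.N = β.N) (hlt : α.lt = β.lt)
    (hlab : α.lab = β.lab) (hform : α.form = β.form) : α = β := by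
  cases α; cases β
  congr

variable {D : Set (LPOF L)} (hne : D.Nonempty) (hdir : DirectedOn LPOF.le D)

lemma trunc_image_directed (hdir : DirectedOn LPOF.le D) (n : ℕ) :
    DirectedOn LPOF.le ((fun β : LPOF L => mkTrunc β n) '' D) := by
  rintro _ ⟨β, hβ, rfl⟩ _ ⟨γ, hγ, rfl⟩
  obtain ⟨δ, hδ, hb, hg⟩ := hdir β hβ γ hγ
  exact ⟨mkTrunc δ n, ⟨δ, hδ, rfl⟩,
    trunc_mono hb (mkTrunc_isTrunc β n) (mkTrunc_isTrunc δ n),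
    trunc_mono hg (mkTrunc_isTrunc γ n) (mkTrunc_isTrunc δ n)⟩

lemma mkSup_trunc_eq (n : ℕ)
    (hne' : ((fun β : LPOF L => mkTrunc β n) '' D).Nonempty)
    (hdir' : DirectedOn LPOF.le ((fun β : LPOF L => mkTrunc β n) '' D)) :
    mkSup hne' hdir' = mkTrunc (mkSup hne hdir) n := by
  set τ := mkSup hne hdir with hτ
  have hτN : τ.N = supN D := rfl
  have hτlt : τ.lt = supLt D := rfl
  -- node sets
  have hN : supN ((fun β : LPOF L => mkTrunc β n) '' D) = truncN τ n := by
    ext x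
    constructor
    · rintro ⟨_, ⟨β, hβ, rfl⟩, hx⟩
      obtain ⟨hx1, hx2⟩ := (hx : x ∈ truncN β n)
      refine ⟨⟨β, hβ, hx1⟩, ?_⟩
      show levOf (supLt D) x ≤ n
      rw [sup_lev hdir hβ hx1]
      exact hx2
    · rintro ⟨⟨β, hβ, hx1⟩, hx2⟩
      refine ⟨mkTrunc β n, ⟨β, hβ, rfl⟩, ?_⟩
      refine (⟨hx1, ?_⟩ : x ∈ truncN β n)
      rw [← sup_lev hdir hβ hx1]
      exact hx2
  refine LPOF.ext' hN ?_ ?_ ?_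
  · -- orders
    funext x y
    apply propext
    constructor
    · rintro ⟨_, ⟨β, hβ, rfl⟩, hxy⟩
      obtain ⟨h1, h2, h3⟩ := (hxy : truncLt β n x y)
      refine ⟨⟨β, hβ, h1⟩, ?_, ?_⟩
      · rw [← hN]; exact ⟨mkTrunc β n, ⟨β, hβ, rfl⟩, h2⟩
      · rw [← hN]; exact ⟨mkTrunc β n, ⟨β, hβ, rfl⟩, h3⟩
    · rintro ⟨⟨γ, hγ, hxy⟩, hx, hy⟩
      refine ⟨mkTrunc γ n, ⟨γ, hγ, rfl⟩, ?_⟩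
      have hx' : x ∈ truncN γ n := by
        refine ⟨(γ.lt_mem hxy).1, ?_⟩
        rw [← sup_lev hdir hγ (γ.lt_mem hxy).1]
        exact hx.2
      have hy' : y ∈ truncN γ n := by
        refine ⟨(γ.lt_mem hxy).2, ?_⟩
        rw [← sup_lev hdir hγ (γ.lt_mem hxy).2]
        exact hy.2
      exact (⟨hxy, hx', hy'⟩ : truncLt γ n x y)
  · -- labels
    funext x
    show supLab hne' hdir' x = (mkTrunc τ n).lab x
    have himg : (fun γ : LPOF L => γ.lab x) '' ((fun β : LPOF L => mkTrunc β n) '' D)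
        = (fun β : LPOF L => (mkTrunc β n).lab x) '' D := Set.image_image _ _ D
    by_cases hcond : x ∈ τ.N ∧ levOf τ.lt x < n
    · have hlabeq : ∀ β ∈ D, (mkTrunc β n).lab x = β.lab x := by
        intro β hβ
        by_cases hxβ : x ∈ β.N
        · exact mkTrunc_lab_pos β n x ⟨hxβ, by rw [← sup_lev hdir hβ hxβ]; exact hcond.2⟩
        · rw [mkTrunc_lab_neg β n x (by rintro ⟨h, _⟩; exact hxβ h), β.lab_junk x hxβ]
      have himg2 : (fun β : LPOF L => (mkTrunc β n).lab x) '' D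
          = (fun β : LPOF L => β.lab x) '' D :=
        Set.image_congr hlabeq
      have h1 := supLab_isLUB hne' hdir' x
      rw [himg, himg2] at h1
      have h2 := supLab_isLUB hne hdir x
      have : supLab hne' hdir' x = supLab hne hdir x := h1.unique h2
      rw [this, mkTrunc_lab_pos τ n x hcond]
      rfl
    · have h1 : supLab hne' hdir' x = ⊥ := by
        refine (supLab_bot_iff hne' hdir' x).2 ?_
        rintro _ ⟨β, hβ, rfl⟩
        rw [mkTrunc_lab_neg]
        rintro ⟨hxβ, hlev⟩
        exact hcond ⟨⟨β, hβ, hxβ⟩, by rw [hτlt, sup_lev hdir hβ hxβ]; exact hlev⟩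
      rw [h1, mkTrunc_lab_neg τ n x hcond]
  · -- formulae
    funext x
    show supForm ((fun β : LPOF L => mkTrunc β n) '' D) x = (mkTrunc τ n).form x
    by_cases hx : x ∈ truncN τ n
    · obtain ⟨⟨β, hβ, hx1⟩, hx2⟩ := hx
      have hxβ : x ∈ truncN β n := by
        refine ⟨hx1, ?_⟩
        rw [← sup_lev hdir hβ hx1]
        exact hx2
      have e1 : supForm ((fun β : LPOF L => mkTrunc β n) '' D) x = (mkTrunc β n).form x :=
        supForm_eq hdir' ⟨β, hβ, rfl⟩ hxβ
      rw [e1, mkTrunc_form_pos β n x hxβ, mkTrunc_form_pos τ n x ⟨⟨β, hβ, hx1⟩, hx2⟩]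
      exact (supForm_eq hdir hβ hx1).symm
    · have e1 : supForm ((fun β : LPOF L => mkTrunc β n) '' D) x = Form.top := by
        rw [supForm, dif_neg]
        rintro ⟨_, ⟨β, hβ, rfl⟩, hc⟩
        obtain ⟨h1, h2⟩ := (hc : x ∈ truncN β n)
        refine hx ⟨⟨β, hβ, h1⟩, ?_⟩
        show levOf (supLt D) x ≤ n
        rw [sup_lev hdir hβ h1]
        exact h2
      rw [e1, mkTrunc_form_neg τ n x hx]

end Final

/-- truncation is Scott continuous: the truncation of the supremum
of a directed set is the supremum of the truncations. -/
theorem stmt9 {L : Type} [LabelDCPO L] (D : Set (LPOF L))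
    (hne : D.Nonempty) (hdir : DirectedOn LPOF.le D)
    (n : ℕ) (σ σn : LPOF L)
    (hσ : isSup LPOF.le D σ) (hσn : IsTrunc σ n σn) :
    isSup LPOF.le {β' | ∃ β ∈ D, IsTrunc β n β'} σn := by
  constructor
  · rintro β' ⟨β, hβ, hβ'⟩
    exact trunc_mono (hσ.1 β hβ) hβ' hσn
  · intro c hc
    set τ := mkSup hne hdir with hτ
    have hστ : σ.le τ := hσ.2 τ (fun β hβ => mkSup_ub hne hdir hβ)
    have h1 : σn.le (mkTrunc τ n) := trunc_mono hστ hσn (mkTrunc_isTrunc τ n)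
    have hne' : ((fun β : LPOF L => mkTrunc β n) '' D).Nonempty := hne.image _
    have hdir' := trunc_image_directed hdir n
    have heq : mkSup hne' hdir' = mkTrunc τ n := mkSup_trunc_eq hne hdir n hne' hdir'
    have h2 : (mkTrunc τ n).le c := by
      rw [← heq]
      refine mkSup_least hne' hdir' ?_
      rintro _ ⟨β, hβ, rfl⟩
      exact hc _ ⟨β, hβ, mkTrunc_isTrunc β n⟩
    exact LPOF.le_trans' h1 h2
end

section
/- If α ⊑ β for LPOFs α, β, then the stuck formula of β implies the stuck formula of α, i.e., stuck_β ⇒ stuck_α. -/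
variable {L : Type} [LabelDCPO L]

lemma exists_max_rel (lt : ℕ → ℕ → Prop)
    (htr : ∀ {x y z}, lt x y → lt y z → lt x z)
    (hirr : ∀ x, ¬ lt x x) {S : Set ℕ} (hS : S.Finite) (hne : S.Nonempty) :
    ∃ m ∈ S, ∀ y ∈ S, ¬ lt m y := by
  classical
  obtain ⟨x0, hx0⟩ := hne
  set S' := hS.toFinset with hS'
  have hx0' : x0 ∈ S' := hS.mem_toFinset.2 hx0
  obtain ⟨m, hm, hmin⟩ := S'.exists_min_image
    (fun m => (S'.filter (fun z => lt m z)).card) ⟨x0, hx0'⟩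
  refine ⟨m, hS.mem_toFinset.1 hm, ?_⟩
  intro y hy hlt
  have hy' : y ∈ S' := hS.mem_toFinset.2 hy
  have hsub : S'.filter (fun z => lt y z) ⊂ S'.filter (fun z => lt m z) := by
    constructor
    · intro z hz
      simp only [Finset.mem_filter] at hz ⊢
      exact ⟨hz.1, htr hlt hz.2⟩
    · intro hcont
      have hymem : y ∈ S'.filter (fun z => lt y z) :=
        hcont (by simp [Finset.mem_filter, hy', hlt])
      simp only [Finset.mem_filter] at hymem
      exact hirr y hymem.2
  have h1 := Finset.card_lt_card hsub
  have h2 := hmin y hy'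
  omega

/-- if α ⊑ β, then stuck_β ⇒ stuck_α (semantically). -/
theorem stmt10 {L : Type} [LabelDCPO L] (α β : LPOF L) (h : LPOF.le α β) :
    ∀ v, stuckSat β v → stuckSat α v := by
  obtain ⟨hN, hdc, hord, hlab, hform, hsucc⟩ := h
  rintro v ⟨x, hxN, hxbot, hxsat⟩
  by_cases hxα : x ∈ α.N
  · refine ⟨x, hxα, ?_, ?_⟩
    · have := hlab x hxα
      rw [hxbot] at this
      exact le_bot_iff.1 this
    · rw [hform x hxα]; exact hxsat
  · -- x ∈ β.N \ α.N : find w ∈ α.Bot with β.lt w x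
    obtain ⟨r, ⟨hrN, hrmin⟩, hru⟩ := α.singleRoot
    have hrβ : ∀ y, ¬ β.lt y r := by
      intro y hy
      have hyα : y ∈ α.N := hdc r hrN y hy
      exact hrmin y ((hord y r).2 ⟨hy, hyα, hrN⟩)
    obtain ⟨rb, hrb, hrbu⟩ := β.singleRoot
    have hrrb : r = rb := hrbu r ⟨hN hrN, hrβ⟩
    -- Q : non-α nodes ≤ x (in β)
    set Q : Set ℕ := {y | y ∉ α.N ∧ (β.lt y x ∨ y = x)} with hQ
    have hQfin : Q.Finite := by
      apply ((β.finPred x).union (Set.finite_singleton x)).subset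
      rintro y ⟨_, hy | hy⟩
      · exact Or.inl hy
      · exact Or.inr hy
    have hxQ : x ∈ Q := ⟨hxα, Or.inr rfl⟩
    obtain ⟨y, hyQ, hymin⟩ := exists_max_rel (fun a b => β.lt b a)
      (fun hab hbc => β.lt_trans hbc hab) β.lt_irrefl hQfin ⟨x, hxQ⟩
    have hyN : y ∈ β.N := by
      rcases hyQ.2 with hy | hy
      · exact (β.lt_mem hy).1
      · exact hy ▸ hxN
    have hyx : ∀ {w}, β.lt w y → β.lt w x := by
      intro w hw
      rcases hyQ.2 with hy | hy
      · exact β.lt_trans hw hy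
      · exact hy ▸ hw
    -- y has a β-predecessor
    have hpred : ∃ p, β.lt p y := by
      by_contra hnone
      push_neg at hnone
      have : y = rb := hrbu y ⟨hyN, fun p hp => hnone p hp⟩
      exact hyQ.1 (this ▸ hrrb ▸ hrN)
    -- maximal predecessor z
    obtain ⟨z, hzP, hzmax⟩ := exists_max_rel β.lt (fun hab hbc => β.lt_trans hab hbc)
      β.lt_irrefl (β.finPred y) hpred
    have hzy : β.lt z y := hzP
    have hzα : z ∈ α.N := by
      by_contra hzc
      exact hymin z ⟨hzc, Or.inl (hyx hzy)⟩ hzy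
    have hysucc : y ∈ β.succs z := by
      refine ⟨hzy, ?_⟩
      rintro ⟨w, hzw, hwy⟩
      exact hzmax w hwy hzw
    have hynotα : y ∉ α.succs z := by
      intro hy
      exact hyQ.1 ((α.lt_mem hy.1).2)
    rw [hsucc z hzα] at hynotα
    have : y ∈ β.succPlus α.Bot := by
      by_contra hc
      exact hynotα ⟨hysucc, hc⟩
    obtain ⟨w, hwBot, hwy⟩ := this
    refine ⟨w, hwBot.1, hwBot.2, ?_⟩
    rw [hform w hwBot.1]
    exact β.form_impl (hyx hwy) v hxsat
end

section
/- If α ⊑ β for finite LPOFs, then the extensible nodes of α are exactly those extensible nodes x of β such that φ_β(x) does not imply stuck_α; in particular extens_α ⊆ extens_β. -/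
variable {L : Type} [LabelDCPO L]

/-- Every node of β not in α lies strictly above a ⊥-node of α. -/
lemma predA {L : Type} [LabelDCPO L] {α β : LPOF L} (h : LPOF.le α β) :
    ∀ y, y ∈ β.N → y ∉ α.N → ∃ z, z ∈ α.N ∧ α.lab z = ⊥ ∧ β.lt z y := by
  obtain ⟨hsub, hdown, hltiff, hlab, hform, hsuccs⟩ := h
  obtain ⟨r, ⟨hrN, hrmin⟩, _⟩ := α.singleRoot
  have hrβ : ∀ z, ¬ β.lt z r := by
    intro z hz
    have hzα : z ∈ α.N := hdown r hrN z hz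
    exact hrmin z ((hltiff z r).2 ⟨hz, hzα, hrN⟩)
  obtain ⟨rb, hrb, hrbuniq⟩ := β.singleRoot
  have hrrb : r = rb := hrbuniq r ⟨hsub hrN, hrβ⟩
  have hcardlt : ∀ a b, β.lt a b →
      (β.finPred a).toFinset.card < (β.finPred b).toFinset.card := by
    intro a b hab
    apply Finset.card_lt_card
    have hss : (β.finPred a).toFinset ⊆ (β.finPred b).toFinset := by
      intro w hw
      rw [Set.Finite.mem_toFinset] at *
      exact β.lt_trans hw hab
    rw [Finset.ssubset_iff_of_subset hss]
    refine ⟨a, ?_, ?_⟩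
    · rw [Set.Finite.mem_toFinset]; exact hab
    · rw [Set.Finite.mem_toFinset]; exact β.lt_irrefl a
  suffices H : ∀ n y, (β.finPred y).toFinset.card = n → y ∈ β.N → y ∉ α.N →
      ∃ z, z ∈ α.N ∧ α.lab z = ⊥ ∧ β.lt z y by
    intro y hy hy'; exact H _ y rfl hy hy'
  intro n
  induction n using Nat.strong_induction_on with
  | _ n ih =>
  intro y hcard hyβ hyα
  -- y has a β-predecessor (otherwise y is the root, which lies in α)
  have hPne : ∃ z, β.lt z y := by
    by_contra hcon
    push_neg at hcon
    have : y = rb := hrbuniq y ⟨hyβ, hcon⟩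
    exact hyα (this ▸ hrrb ▸ hrN)
  -- choose a predecessor with maximal predecessor-set cardinality
  have hFne : ((β.finPred y).toFinset).Nonempty := by
    obtain ⟨z, hz⟩ := hPne
    exact ⟨z, by rw [Set.Finite.mem_toFinset]; exact hz⟩
  obtain ⟨z, hzF, hzmax⟩ := Finset.exists_max_image (β.finPred y).toFinset
    (fun w => (β.finPred w).toFinset.card) hFne
  rw [Set.Finite.mem_toFinset] at hzF
  have hzβ : z ∈ β.N := (β.lt_mem hzF).1
  -- y is an immediate successor of z in β
  have hysucc : y ∈ β.succs z := by
    refine ⟨hzF, ?_⟩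
    rintro ⟨w, hzw, hwy⟩
    have hwF : w ∈ (β.finPred y).toFinset := by
      rw [Set.Finite.mem_toFinset]; exact hwy
    exact absurd (hzmax w hwF) (not_le.mpr (hcardlt z w hzw))
  by_cases hzα : z ∈ α.N
  · -- z ∈ α: y must be above a ⊥-node of α by the succs condition
    have heq := hsuccs z hzα
    have hyns : y ∉ α.succs z := by
      rintro ⟨hlt, -⟩
      exact hyα (α.lt_mem hlt).2
    have : y ∈ β.succPlus α.Bot := by
      by_contra hcon
      exact hyns (heq ▸ Set.mem_diff_of_mem hysucc hcon)
    obtain ⟨x, ⟨hx1, hx2⟩, hx3⟩ := this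
    exact ⟨x, hx1, hx2, hx3⟩
  · -- z ∉ α: recurse on z, which has a smaller predecessor set
    obtain ⟨x, hx1, hx2, hx3⟩ :=
      ih _ (hcard ▸ hcardlt z y hzF) z rfl hzβ hzα
    exact ⟨x, hx1, hx2, β.lt_trans hx3 hzF⟩

/-- for finite LPOFs with α ⊑ β, the extensible nodes of α are
exactly the extensible nodes x of β whose formula does not imply stuck_α;
in particular extens α ⊆ extens β. -/
theorem stmt11 {L : Type} [LabelDCPO L] (α β : LPOF L)
    (hαfin : α.N.Finite) (hβfin : β.N.Finite) (h : LPOF.le α β) :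
    extens α = {x ∈ extens β | ¬ ∀ v, (β.form x).sat v → stuckSat α v} ∧
    extens α ⊆ extens β := by
  obtain ⟨hsub, hdown, hltiff, hlab, hform, hsuccs⟩ := h
  have hle : LPOF.le α β := ⟨hsub, hdown, hltiff, hlab, hform, hsuccs⟩
  -- stuckness in β implies stuckness in α
  have stuckBA : ∀ v, stuckSat β v → stuckSat α v := by
    rintro v ⟨y, hyβ, hylab, hysat⟩
    by_cases hyα : y ∈ α.N
    · refine ⟨y, hyα, le_bot_iff.mp (hylab ▸ hlab y hyα), ?_⟩
      rw [hform y hyα]; exact hysat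
    · obtain ⟨z, hz1, hz2, hz3⟩ := predA hle y hyβ hyα
      refine ⟨z, hz1, hz2, ?_⟩
      rw [hform z hz1]; exact β.form_impl hz3 v hysat
  have heq : extens α = {x ∈ extens β | ¬ ∀ v, (β.form x).sat v → stuckSat α v} := by
    ext x
    constructor
    · rintro ⟨hxα, hnx⟩
      push_neg at hnx
      obtain ⟨v, hsat, hnst⟩ := hnx
      have hsatβ : (β.form x).sat v := (hform x hxα) ▸ hsat
      refine ⟨⟨hsub hxα, ?_⟩, ?_⟩
      · intro hall
        exact hnst (stuckBA v (hall v hsatβ))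
      · intro hall
        exact hnst (hall v hsatβ)
    · rintro ⟨⟨hxβ, -⟩, hn⟩
      have hxα : x ∈ α.N := by
        by_contra hxα
        apply hn
        intro v hv
        obtain ⟨z, hz1, hz2, hz3⟩ := predA hle x hxβ hxα
        refine ⟨z, hz1, hz2, ?_⟩
        rw [hform z hz1]; exact β.form_impl hz3 v hv
      refine ⟨hxα, ?_⟩
      intro hall
      apply hn
      intro v hv
      exact hall v ((hform x hxα).symm ▸ hv)
  refine ⟨heq, ?_⟩
  intro x hx
  rw [heq] at hx
  exact hx.1
end
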